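/- arXiv:2502.19134 — 3 statements merged into one kernel-verified Lean document; each statement's English description precedes it below -/
import Mathlib

section
/- Let d = 2 or d = 3 and let σ > 0 satisfy σ < 2/(d−2) when d = 3 (no upper restriction when d = 2). Then there exists a constant C = C(d,σ) > 0 such that for every Schwartz function u : ℝ^d → ℂ one has ∫_{ℝ^d} |u|^{2σ+2} dx ≤ C · (∫_{ℝ^d} |∇u|² dx)^{dσ/2} · (∫_{ℝ^d} |u|² dx)^{(σ(2−d)+2)/2} (Gagliardo–Nirenberg inequality). -/
open MeasureTheory Real Complex Filter

open Metric Set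
open scoped ENNReal NNReal Topology

/-- Finiteness of `∫⁻ ‖f‖₊ ^ r` for Schwartz `f` and `r ≥ 1`. -/
lemma schwartz_lintegral_rpow_lt_top {E F : Type*} [NormedAddCommGroup E] [NormedSpace ℝ E]
    [MeasurableSpace E] [BorelSpace E] [SecondCountableTopology E]
    [NormedAddCommGroup F] [NormedSpace ℝ F]
    {μ : Measure E} [μ.HasTemperateGrowth]
    (f : SchwartzMap E F) {r : ℝ} (hr : 1 ≤ r) :
    ∫⁻ x, (‖f x‖₊ : ℝ≥0∞) ^ r ∂μ ≠ ∞ := by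
  obtain ⟨M, hM0, hM⟩ := f.decay 0 0
  have hM' : ∀ x, ‖f x‖ ≤ M := by
    intro x
    simpa [norm_iteratedFDeriv_zero] using hM x
  have hpt : ∀ x, (‖f x‖₊ : ℝ≥0∞) ^ r ≤ ENNReal.ofReal M ^ (r - 1) * ‖f x‖₊ := by
    intro x
    have h1 : (‖f x‖₊ : ℝ≥0∞) ^ r = (‖f x‖₊ : ℝ≥0∞) ^ (r - 1) * (‖f x‖₊ : ℝ≥0∞) ^ (1:ℝ) := by
      rw [← ENNReal.rpow_add_of_nonneg (r - 1) 1 (by linarith) zero_le_one]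
      norm_num
    rw [h1, ENNReal.rpow_one]
    refine mul_le_mul_left (ENNReal.rpow_le_rpow ?_ (by linarith)) _
    rw [← enorm_eq_nnnorm, ← ofReal_norm]
    exact ENNReal.ofReal_le_ofReal (hM' x)
  refine ne_top_of_le_ne_top ?_ (lintegral_mono hpt)
  rw [lintegral_const_mul' _ _ (ENNReal.rpow_ne_top_of_nonneg (by linarith) ENNReal.ofReal_ne_top)]
  apply ENNReal.mul_ne_top (ENNReal.rpow_ne_top_of_nonneg (by linarith) ENNReal.ofReal_ne_top)
  exact (f.integrable (μ := μ)).2.ne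

/-- Interpolation inequality for lintegrals of powers. -/
lemma lintegral_rpow_interp {α : Type*} [MeasurableSpace α] {μ : Measure α}
    {g : α → ℝ≥0∞} (hg : AEMeasurable g μ) {e1 e2 θ : ℝ}
    (hθ : 0 < θ) (hθ1 : θ < 1) (he1 : 0 ≤ e1) (he2 : 0 ≤ e2) :
    ∫⁻ x, g x ^ (θ * e1 + (1 - θ) * e2) ∂μ
      ≤ (∫⁻ x, g x ^ e1 ∂μ) ^ θ * (∫⁻ x, g x ^ e2 ∂μ) ^ (1 - θ) := by
  have hθ1' : (0:ℝ) < 1 - θ := by linarith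
  have hcj : (θ⁻¹).HolderConjugate (1 - θ)⁻¹ :=
    Real.HolderConjugate.inv_inv hθ hθ1' (by ring)
  have key := ENNReal.lintegral_mul_le_Lp_mul_Lq μ hcj
    (f := fun x => g x ^ (θ * e1)) (g := fun x => g x ^ ((1 - θ) * e2))
    (hg.pow_const _) (hg.pow_const _)
  simp only [Pi.mul_apply] at key
  have h1 : ∀ x, g x ^ (θ * e1 + (1 - θ) * e2) = g x ^ (θ * e1) * g x ^ ((1 - θ) * e2) :=
    fun x => ENNReal.rpow_add_of_nonneg _ _ (by positivity) (by positivity)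
  calc ∫⁻ x, g x ^ (θ * e1 + (1 - θ) * e2) ∂μ
      = ∫⁻ x, g x ^ (θ * e1) * g x ^ ((1 - θ) * e2) ∂μ := by simp_rw [h1]
    _ ≤ (∫⁻ x, (g x ^ (θ * e1)) ^ θ⁻¹ ∂μ) ^ (1/θ⁻¹) *
        (∫⁻ x, (g x ^ ((1 - θ) * e2)) ^ (1-θ)⁻¹ ∂μ) ^ (1/(1-θ)⁻¹) := key
    _ = (∫⁻ x, g x ^ e1 ∂μ) ^ θ * (∫⁻ x, g x ^ e2 ∂μ) ^ (1 - θ) := by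
        rw [one_div, inv_inv, one_div, inv_inv]
        congr 2 <;> refine lintegral_congr fun x => ?_ <;>
          rw [← ENNReal.rpow_mul] <;> congr 1 <;> field_simp

/-- Sobolev inequality without compact support assumption, for `C¹` functions with
finite `Lᵖ` norms on Euclidean space. -/
lemma sobolev_noncompact {d : ℕ} (hd : 0 < d) {F : Type*} [NormedAddCommGroup F]
    [NormedSpace ℝ F] [FiniteDimensional ℝ F]
    {w : EuclideanSpace ℝ (Fin d) → F} (hw : ContDiff ℝ 1 w)
    {p p' : ℝ≥0} (hp : 1 ≤ p) (hp'0 : p' ≠ 0)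
    (hp' : ((p' : ℝ))⁻¹ = (p : ℝ)⁻¹ - (d : ℝ)⁻¹)
    (hN : eLpNorm w p volume ≠ ⊤) (hD : eLpNorm (fderiv ℝ w) p volume ≠ ⊤) :
    eLpNorm w p' volume ≤
      (SNormLESNormFDerivOfEqConst F (volume : Measure (EuclideanSpace ℝ (Fin d))) (p : ℝ) : ℝ≥0∞) * eLpNorm (fderiv ℝ w) p volume := by
  have hp'ℝ0 : ((p' : ℝ)) ≠ 0 := by exact_mod_cast hp'0
  have hp'ℝpos : (0:ℝ) < (p' : ℝ) := lt_of_le_of_ne (by positivity) (Ne.symm hp'ℝ0)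
  set μ : Measure (EuclideanSpace ℝ (Fin d)) := volume with hμ
  set C : ℝ≥0 := SNormLESNormFDerivOfEqConst F μ (p : ℝ) with hC
  set D := eLpNorm (fderiv ℝ w) p μ with hDd
  set N := eLpNorm w p μ with hNd
  set f : ContDiffBump (0 : EuclideanSpace ℝ (Fin d)) := ⟨1, 2, one_pos, one_lt_two⟩ with hf
  have hfc : HasCompactSupport (f : EuclideanSpace ℝ (Fin d) → ℝ) := by
    rw [HasCompactSupport, f.tsupport_eq]; exact isCompact_closedBall _ _
  obtain ⟨K₀, hK₀⟩ := (hfc.fderiv ℝ).exists_bound_of_continuous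
    ((f.contDiff (n := 1)).continuous_fderiv (by simp))
  set K : ℝ := max K₀ 0 with hKdef
  have hK : ∀ y, ‖fderiv ℝ (f : EuclideanSpace ℝ (Fin d) → ℝ) y‖ ≤ K :=
    fun y => (hK₀ y).trans (le_max_left _ _)
  have hK0 : (0:ℝ) ≤ K := le_max_right _ _
  -- key estimate with cutoff at radius m
  have key : ∀ m : ℕ, 1 ≤ m →
      eLpNorm ((closedBall (0 : EuclideanSpace ℝ (Fin d)) (m:ℝ)).indicator w) p' μ
        ≤ C * (D + (ENNReal.ofReal K / m) * N) := by
    intro m hm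
    have hm0 : (0:ℝ) < m := by exact_mod_cast hm
    set c : ℝ := (m : ℝ)⁻¹ with hcdef
    have hc0 : 0 < c := by positivity
    set φ : EuclideanSpace ℝ (Fin d) → ℝ := fun x => f (c • x) with hφ
    set v : EuclideanSpace ℝ (Fin d) → F := fun x => φ x • w x with hv
    have hφsm : ContDiff ℝ 1 φ := (f.contDiff (n := 1)).comp (contDiff_const_smul c)
    have hvsm : ContDiff ℝ 1 v := hφsm.smul hw
    have hv2 : HasCompactSupport v := by
      apply HasCompactSupport.intro (isCompact_closedBall (0 : EuclideanSpace ℝ (Fin d)) (2*m))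
      intro x hx
      have hxn : (2:ℝ)*m < ‖x‖ := by
        rw [mem_closedBall, dist_zero_right, not_le] at hx
        exact hx
      have h2 : f.rOut ≤ dist (c • x) 0 := by
        rw [dist_zero_right, norm_smul, Real.norm_eq_abs, _root_.abs_of_pos hc0]
        show (2:ℝ) ≤ c * ‖x‖
        rw [hcdef, inv_mul_eq_div, le_div_iff₀ hm0]
        linarith
      have hz : φ x = 0 := f.zero_of_le_dist h2
      simp only [hv, hz, zero_smul]
    have hn' : 0 < Module.finrank ℝ (EuclideanSpace ℝ (Fin d)) := by
      rw [finrank_euclideanSpace_fin]; exact hd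
    have happ := eLpNorm_le_eLpNorm_fderiv_of_eq (p := p) (p' := p') μ hvsm hv2 hp hn'
      (by rw [finrank_euclideanSpace_fin, NNReal.coe_inv]; exact_mod_cast hp')
    -- pointwise derivative bound
    have hder : ∀ x, ‖fderiv ℝ v x‖ ≤ ‖fderiv ℝ w x‖ + (K * c) * ‖w x‖ := by
      intro x
      have h1 : HasFDerivAt (fun y : EuclideanSpace ℝ (Fin d) => c • y)
          (c • ContinuousLinearMap.id ℝ (EuclideanSpace ℝ (Fin d))) x :=
        (hasFDerivAt_id x).const_smul c
      have hfd : HasFDerivAt (f : EuclideanSpace ℝ (Fin d) → ℝ)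
          (fderiv ℝ (f : EuclideanSpace ℝ (Fin d) → ℝ) (c • x)) (c • x) :=
        (((f.contDiff (n := 1)).differentiable (by simp)) (c • x)).hasFDerivAt
      have h2 : HasFDerivAt φ ((fderiv ℝ (⇑f) (c • x)).comp
          (c • ContinuousLinearMap.id ℝ (EuclideanSpace ℝ (Fin d)))) x := hfd.comp x h1
      have h3 : HasFDerivAt v (φ x • fderiv ℝ w x +
          ((fderiv ℝ (⇑f) (c • x)).comp
            (c • ContinuousLinearMap.id ℝ (EuclideanSpace ℝ (Fin d)))).smulRight (w x)) x :=
        h2.smul ((hw.differentiable (by simp)) x).hasFDerivAt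
      rw [h3.fderiv]
      refine (norm_add_le _ _).trans ?_
      have e1 : ‖φ x • fderiv ℝ w x‖ ≤ ‖fderiv ℝ w x‖ := by
        refine (ContinuousLinearMap.opNorm_smul_le _ _).trans ?_
        apply mul_le_of_le_one_left (norm_nonneg _)
        rw [Real.norm_eq_abs, _root_.abs_of_nonneg f.nonneg]
        exact f.le_one
      have e2 : ‖((fderiv ℝ (⇑f) (c • x)).comp
          (c • ContinuousLinearMap.id ℝ (EuclideanSpace ℝ (Fin d)))).smulRight (w x)‖
          ≤ (K * c) * ‖w x‖ := by
        rw [ContinuousLinearMap.norm_smulRight_apply]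
        have hcomp : ‖(fderiv ℝ (⇑f) (c • x)).comp
            (c • ContinuousLinearMap.id ℝ (EuclideanSpace ℝ (Fin d)))‖ ≤ K * c := by
          refine (ContinuousLinearMap.opNorm_comp_le _ _).trans ?_
          have h5 : ‖c • ContinuousLinearMap.id ℝ (EuclideanSpace ℝ (Fin d))‖ ≤ c := by
            refine (ContinuousLinearMap.opNorm_smul_le _ _).trans ?_
            rw [Real.norm_eq_abs, _root_.abs_of_pos hc0]
            calc c * ‖ContinuousLinearMap.id ℝ (EuclideanSpace ℝ (Fin d))‖ ≤ c * 1 :=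
                  mul_le_mul_of_nonneg_left ContinuousLinearMap.norm_id_le hc0.le
              _ = c := mul_one c
          exact mul_le_mul (hK _) h5 (norm_nonneg _) hK0
        exact mul_le_mul_of_nonneg_right hcomp (norm_nonneg _)
      linarith
    -- eLpNorm bound for the derivative
    have hgb : eLpNorm (fderiv ℝ v) p μ ≤ D + ENNReal.ofReal (K * c) * N := by
      set F1 : EuclideanSpace ℝ (Fin d) → ℝ := fun x => ‖fderiv ℝ w x‖ with hF1
      set F2 : EuclideanSpace ℝ (Fin d) → ℝ := fun x => (K * c) * ‖w x‖ with hF2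
      have hmeas1 : AEStronglyMeasurable F1 μ :=
        ((hw.continuous_fderiv (by simp)).norm).aestronglyMeasurable
      have hmeas2 : AEStronglyMeasurable F2 μ :=
        (continuous_const.mul hw.continuous.norm).aestronglyMeasurable
      calc eLpNorm (fderiv ℝ v) p μ
          ≤ eLpNorm (F1 + F2) p μ := by
            apply eLpNorm_mono_real
            intro x
            simpa using hder x
        _ ≤ eLpNorm F1 p μ + eLpNorm F2 p μ :=
            eLpNorm_add_le hmeas1 hmeas2 (by exact_mod_cast hp)
        _ = D + ENNReal.ofReal (K * c) * N := by
            congr 1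
            · rw [hF1, eLpNorm_norm]
            · have hsm : F2 = (K * c) • (fun x => ‖w x‖) := by
                funext x; simp [hF2, smul_eq_mul]
              rw [hsm, eLpNorm_const_smul, eLpNorm_norm, Real.enorm_eq_ofReal (by positivity)]
    have hφ1 : ∀ x ∈ closedBall (0 : EuclideanSpace ℝ (Fin d)) (m:ℝ), φ x = 1 := by
      intro x hx
      apply f.one_of_mem_closedBall
      rw [mem_closedBall, dist_zero_right] at hx ⊢
      rw [norm_smul, Real.norm_eq_abs, _root_.abs_of_pos hc0]
      show c * ‖x‖ ≤ 1
      rw [hcdef, inv_mul_eq_div, div_le_one hm0]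
      exact hx
    calc eLpNorm ((closedBall (0 : EuclideanSpace ℝ (Fin d)) (m:ℝ)).indicator w) p' μ
        ≤ eLpNorm v p' μ := by
          apply eLpNorm_mono
          intro x
          by_cases hx : x ∈ closedBall (0 : EuclideanSpace ℝ (Fin d)) (m:ℝ)
          · rw [Set.indicator_of_mem hx]
            simp only [hv, hφ1 x hx, one_smul, le_refl]
          · rw [Set.indicator_of_notMem hx]
            simp
      _ ≤ C * eLpNorm (fderiv ℝ v) p μ := happ
      _ ≤ C * (D + ENNReal.ofReal K / m * N) := by
          gcongr
          refine hgb.trans ?_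
          gcongr
          rw [ENNReal.ofReal_mul hK0, hcdef, ENNReal.ofReal_inv_of_pos hm0,
            ENNReal.ofReal_natCast, ENNReal.div_eq_inv_mul]
          ring_nf
          exact le_rfl
  -- monotonicity in the radius
  have hmono : ∀ n m : ℕ, n ≤ m →
      eLpNorm ((closedBall (0 : EuclideanSpace ℝ (Fin d)) (n:ℝ)).indicator w) p' μ
        ≤ eLpNorm ((closedBall (0 : EuclideanSpace ℝ (Fin d)) (m:ℝ)).indicator w) p' μ := by
    intro n m h
    apply eLpNorm_mono
    intro x
    by_cases hx : x ∈ closedBall (0 : EuclideanSpace ℝ (Fin d)) (n:ℝ)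
    · rw [Set.indicator_of_mem hx,
        Set.indicator_of_mem (closedBall_subset_closedBall (by exact_mod_cast h) hx)]
    · rw [Set.indicator_of_notMem hx]; simp
  -- uniform bound
  have hbound : ∀ n : ℕ,
      eLpNorm ((closedBall (0 : EuclideanSpace ℝ (Fin d)) (n:ℝ)).indicator w) p' μ
        ≤ C * D := by
    intro n
    have h0 : Tendsto (fun m : ℕ => ENNReal.ofReal K / m * N) atTop (𝓝 0) := by
      have h1 := ENNReal.Tendsto.const_mul (a := ENNReal.ofReal K * N)
        ENNReal.tendsto_inv_nat_nhds_zero (Or.inr (ENNReal.mul_ne_top ENNReal.ofReal_ne_top hN))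
      rw [mul_zero] at h1
      refine h1.congr fun m => ?_
      rw [ENNReal.div_eq_inv_mul]
      ring
    have h2 : Tendsto (fun m : ℕ => D + ENNReal.ofReal K / m * N) atTop (𝓝 (D + 0)) :=
      tendsto_const_nhds.add h0
    rw [add_zero] at h2
    have htend : Tendsto (fun m : ℕ => (C:ℝ≥0∞) * (D + ENNReal.ofReal K / m * N)) atTop
        (𝓝 ((C:ℝ≥0∞) * D)) := ENNReal.Tendsto.const_mul h2 (Or.inr ENNReal.coe_ne_top)
    refine ge_of_tendsto htend ?_
    filter_upwards [eventually_ge_atTop (max n 1)] with m hm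
    exact (hmono n m ((le_max_left n 1).trans hm)).trans (key m ((le_max_right n 1).trans hm))
  -- monotone convergence
  set g : EuclideanSpace ℝ (Fin d) → ℝ≥0∞ := fun x => (‖w x‖₊ : ℝ≥0∞) ^ (p' : ℝ) with hg
  have hgmeas : Measurable g :=
    (ENNReal.continuous_rpow_const.comp
      (ENNReal.continuous_coe.comp hw.continuous.nnnorm)).measurable
  have hsup : (∫⁻ x, g x ∂μ) = ⨆ n : ℕ,
      ∫⁻ x, (closedBall (0 : EuclideanSpace ℝ (Fin d)) (n:ℝ)).indicator g x ∂μ := by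
    rw [← lintegral_iSup (fun n => hgmeas.indicator measurableSet_closedBall)]
    · congr 1; funext x
      refine le_antisymm ?_ (iSup_le fun n => ?_)
      · have hx : x ∈ closedBall (0 : EuclideanSpace ℝ (Fin d)) ((⌈‖x‖⌉₊ : ℕ):ℝ) := by
          rw [mem_closedBall, dist_zero_right]; exact Nat.le_ceil _
        refine le_iSup_of_le ⌈‖x‖⌉₊ ?_
        rw [Set.indicator_of_mem hx]
      · by_cases hx : x ∈ closedBall (0 : EuclideanSpace ℝ (Fin d)) (n:ℝ)
        · rw [Set.indicator_of_mem hx]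
        · rw [Set.indicator_of_notMem hx]; exact zero_le
    · intro i j hij x
      exact Set.indicator_le_indicator_of_subset
        (closedBall_subset_closedBall (by exact_mod_cast hij)) (fun _ => zero_le) x
  have hind : ∀ n : ℕ, ∫⁻ x, (closedBall (0 : EuclideanSpace ℝ (Fin d)) (n:ℝ)).indicator g x ∂μ
      = (eLpNorm ((closedBall (0 : EuclideanSpace ℝ (Fin d)) (n:ℝ)).indicator w) p' μ)
          ^ (p' : ℝ) := by
    intro n
    rw [eLpNorm_nnreal_eq_lintegral hp'0, one_div, ← ENNReal.rpow_mul,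
      inv_mul_cancel₀ hp'ℝ0, ENNReal.rpow_one]
    refine lintegral_congr fun x => ?_
    by_cases hx : x ∈ closedBall (0 : EuclideanSpace ℝ (Fin d)) (n:ℝ)
    · simp [Set.indicator_of_mem hx, hg]; rfl
    · simp [Set.indicator_of_notMem hx, ENNReal.zero_rpow_of_pos hp'ℝpos]
  rw [eLpNorm_nnreal_eq_lintegral hp'0]
  have hle : ∫⁻ x, g x ∂μ ≤ ((C:ℝ≥0∞) * D) ^ (p' : ℝ) := by
    rw [hsup]
    refine iSup_le fun n => ?_
    rw [hind n]
    exact ENNReal.rpow_le_rpow (hbound n) hp'ℝpos.le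
  calc (∫⁻ x, (‖w x‖₊ : ℝ≥0∞) ^ (p' : ℝ) ∂μ) ^ (1/(p' : ℝ))
      ≤ (((C:ℝ≥0∞) * D) ^ (p' : ℝ)) ^ (1/(p' : ℝ)) := ENNReal.rpow_le_rpow hle (by positivity)
    _ = (C:ℝ≥0∞) * D := by
        rw [← ENNReal.rpow_mul, mul_one_div, div_self hp'ℝ0, ENNReal.rpow_one]

/-- Sobolev embedding `H¹ ↪ L⁶` in dimension 3, lintegral form. -/
lemma sobolev_d3 (u : SchwartzMap (EuclideanSpace ℝ (Fin 3)) ℂ) :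
    ∫⁻ x, (‖u x‖₊ : ℝ≥0∞) ^ (6:ℝ) ∂volume ≤
      (SNormLESNormFDerivOfEqConst ℂ (volume : Measure (EuclideanSpace ℝ (Fin 3))) 2 : ℝ≥0∞) ^ (6:ℝ)
        * (∫⁻ x, (‖fderiv ℝ (⇑u) x‖₊ : ℝ≥0∞) ^ (2:ℝ) ∂volume) ^ (3:ℝ) := by
  set μ : Measure (EuclideanSpace ℝ (Fin 3)) := volume with hμ
  set G := ∫⁻ x, (‖fderiv ℝ (⇑u) x‖₊ : ℝ≥0∞) ^ (2:ℝ) ∂μ with hG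
  set X := ∫⁻ x, (‖u x‖₊ : ℝ≥0∞) ^ (6:ℝ) ∂μ with hX
  have hGfin : G ≠ ⊤ := by
    have h := schwartz_lintegral_rpow_lt_top (μ := μ) (SchwartzMap.fderivCLM ℝ _ _ u)
      (r := 2) one_le_two
    refine ne_top_of_le_ne_top h (le_of_eq ?_)
    exact lintegral_congr fun x => by rw [SchwartzMap.fderivCLM_apply]
  have hNfin : eLpNorm (⇑u) ((2:ℝ≥0) : ℝ≥0∞) μ ≠ ⊤ := by
    rw [eLpNorm_nnreal_eq_lintegral two_ne_zero]
    apply ENNReal.rpow_ne_top_of_nonneg (by positivity)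
    have h := schwartz_lintegral_rpow_lt_top (μ := μ) u (r := ((2:ℝ≥0):ℝ)) (by norm_num)
    exact h
  have hDfin : eLpNorm (fderiv ℝ (⇑u)) ((2:ℝ≥0) : ℝ≥0∞) μ ≠ ⊤ := by
    rw [eLpNorm_nnreal_eq_lintegral two_ne_zero]
    apply ENNReal.rpow_ne_top_of_nonneg (by positivity)
    have h := schwartz_lintegral_rpow_lt_top (μ := μ) (SchwartzMap.fderivCLM ℝ _ _ u)
      (r := ((2:ℝ≥0):ℝ)) (by norm_num)
    refine ne_top_of_le_ne_top h (le_of_eq ?_)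
    exact lintegral_congr fun x => by rw [SchwartzMap.fderivCLM_apply]; rfl
  have happ := sobolev_noncompact (d := 3) (by norm_num) (u.smooth 1) (p := 2) (p' := 6)
    one_le_two (by norm_num) (by push_cast; norm_num) hNfin hDfin
  have hL : eLpNorm (⇑u) ((6:ℝ≥0) : ℝ≥0∞) μ = X ^ ((1:ℝ)/6) := by
    rw [eLpNorm_nnreal_eq_lintegral (by norm_num : (6:ℝ≥0) ≠ 0), hX]
    norm_num
    rfl
  have hR : eLpNorm (fderiv ℝ (⇑u)) ((2:ℝ≥0) : ℝ≥0∞) μ = G ^ ((1:ℝ)/2) := by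
    rw [eLpNorm_nnreal_eq_lintegral two_ne_zero, hG]
    norm_num
    rfl
  rw [hL, hR] at happ
  have h6 : X = (X ^ ((1:ℝ)/6)) ^ (6:ℝ) := by
    rw [← ENNReal.rpow_mul]; norm_num
  rw [h6]
  calc (X ^ ((1:ℝ)/6)) ^ (6:ℝ)
      ≤ ((SNormLESNormFDerivOfEqConst ℂ μ 2 : ℝ≥0∞) * G ^ ((1:ℝ)/2)) ^ (6:ℝ) := by
        exact ENNReal.rpow_le_rpow (by exact_mod_cast happ) (by norm_num)
    _ = (SNormLESNormFDerivOfEqConst ℂ μ 2 : ℝ≥0∞) ^ (6:ℝ) * G ^ (3:ℝ) := by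
        rw [ENNReal.mul_rpow_of_nonneg _ _ (by norm_num : (0:ℝ) ≤ 6), ← ENNReal.rpow_mul]
        norm_num

/-- Ladyzhenskaya-type inequality in dimension 2, lintegral form. -/
lemma ladyzhenskaya (u : SchwartzMap (EuclideanSpace ℝ (Fin 2)) ℂ) {s : ℝ} (hs : 1 < s)
    (hfin : ∫⁻ x, (‖u x‖₊ : ℝ≥0∞) ^ (2*(s-1)) ∂volume ≠ ⊤) :
    ∫⁻ x, (‖u x‖₊ : ℝ≥0∞) ^ (2*s) ∂volume ≤
      ((SNormLESNormFDerivOfEqConst ℝ (volume : Measure (EuclideanSpace ℝ (Fin 2))) 1 : ℝ≥0∞)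
          * ENNReal.ofReal s) ^ (2:ℝ)
        * (∫⁻ x, (‖u x‖₊ : ℝ≥0∞) ^ (2*(s-1)) ∂volume)
        * (∫⁻ x, (‖fderiv ℝ (⇑u) x‖₊ : ℝ≥0∞) ^ (2:ℝ) ∂volume) := by
  have hs0 : (0:ℝ) < s := lt_trans one_pos hs
  set μ : Measure (EuclideanSpace ℝ (Fin 2)) := volume with hμ
  set C1 := (SNormLESNormFDerivOfEqConst ℝ (volume : Measure (EuclideanSpace ℝ (Fin 2))) 1 : ℝ≥0∞)
    with hC1
  set G := ∫⁻ x, (‖fderiv ℝ (⇑u) x‖₊ : ℝ≥0∞) ^ (2:ℝ) ∂μ with hG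
  set J2 := ∫⁻ x, (‖u x‖₊ : ℝ≥0∞) ^ (2*(s-1)) ∂μ with hJ2
  set X := ∫⁻ x, (‖u x‖₊ : ℝ≥0∞) ^ (2*s) ∂μ with hX
  set v : EuclideanSpace ℝ (Fin 2) → ℝ := fun x => ‖u x‖ ^ s with hv
  have hvsm : ContDiff ℝ 1 v := (u.smooth 1).norm_rpow hs
  have hGfin : G ≠ ⊤ := by
    have h := schwartz_lintegral_rpow_lt_top (μ := μ) (SchwartzMap.fderivCLM ℝ _ _ u)
      (r := 2) one_le_two
    refine ne_top_of_le_ne_top h (le_of_eq ?_)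
    exact lintegral_congr fun x => by rw [SchwartzMap.fderivCLM_apply]
  have hvnn : ∀ x, (‖v x‖₊ : ℝ≥0∞) = (‖u x‖₊ : ℝ≥0∞) ^ s := by
    intro x
    rw [← ENNReal.coe_rpow_of_nonneg _ hs0.le]
    congr 1
    rw [hv]
    rw [Real.nnnorm_rpow_of_nonneg (norm_nonneg _), nnnorm_norm]
  have hNv : eLpNorm v ((1:ℝ≥0) : ℝ≥0∞) μ ≠ ⊤ := by
    rw [ENNReal.coe_one, eLpNorm_one_eq_lintegral_enorm]
    have h := schwartz_lintegral_rpow_lt_top (μ := μ) u (r := s) hs.le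
    refine ne_top_of_le_ne_top h (le_of_eq ?_)
    refine lintegral_congr fun x => ?_
    rw [enorm_eq_nnnorm, hvnn x]
  -- pointwise bound on the derivative of v
  have hptd : ∀ x, (‖fderiv ℝ v x‖₊ : ℝ≥0∞) ≤
      ENNReal.ofReal s * ((‖u x‖₊ : ℝ≥0∞) ^ (s-1) * (‖fderiv ℝ (⇑u) x‖₊ : ℝ≥0∞)) := by
    intro x
    have hb := norm_fderiv_norm_rpow_le ((u.smooth 1).differentiable (by simp)) hs (x := x)
    calc (‖fderiv ℝ v x‖₊ : ℝ≥0∞) = ENNReal.ofReal ‖fderiv ℝ v x‖ :=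
          (ofReal_norm _).symm
      _ ≤ ENNReal.ofReal (s * ‖u x‖ ^ (s-1) * ‖fderiv ℝ (⇑u) x‖) := ENNReal.ofReal_le_ofReal hb
      _ = ENNReal.ofReal s * ((‖u x‖₊ : ℝ≥0∞) ^ (s-1) * (‖fderiv ℝ (⇑u) x‖₊ : ℝ≥0∞)) := by
          rw [ENNReal.ofReal_mul (by positivity), ENNReal.ofReal_mul hs0.le, mul_assoc]
          congr 2
          · rw [← enorm_eq_nnnorm, ← ofReal_norm,
              ENNReal.ofReal_rpow_of_nonneg (norm_nonneg _) (by linarith : (0:ℝ) ≤ s - 1)]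
          · rw [ofReal_norm, enorm_eq_nnnorm]
  -- Hölder/Cauchy-Schwarz
  have humeas : Measurable fun x => (‖u x‖₊ : ℝ≥0∞) :=
    (ENNReal.continuous_coe.comp (u.continuous).nnnorm).measurable
  have hgmeas : Measurable fun x => (‖fderiv ℝ (⇑u) x‖₊ : ℝ≥0∞) :=
    (ENNReal.continuous_coe.comp ((u.smooth 1).continuous_fderiv (by simp)).nnnorm).measurable
  have hHold : ∫⁻ x, (‖u x‖₊ : ℝ≥0∞) ^ (s-1) * (‖fderiv ℝ (⇑u) x‖₊ : ℝ≥0∞) ∂μ ≤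
      J2 ^ ((1:ℝ)/2) * G ^ ((1:ℝ)/2) := by
    have hcj : (2:ℝ).HolderConjugate 2 := Real.HolderConjugate.two_two
    have key := ENNReal.lintegral_mul_le_Lp_mul_Lq μ hcj
      (f := fun x => (‖u x‖₊ : ℝ≥0∞) ^ (s-1)) (g := fun x => (‖fderiv ℝ (⇑u) x‖₊ : ℝ≥0∞))
      ((ENNReal.continuous_rpow_const.comp (ENNReal.continuous_coe.comp
        (u.continuous).nnnorm)).measurable.aemeasurable) hgmeas.aemeasurable
    simp only [Pi.mul_apply] at key
    refine key.trans (le_of_eq ?_)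
    congr 1
    · congr 1
      refine lintegral_congr fun x => ?_
      rw [← ENNReal.rpow_mul]
      congr 1
      ring
  -- bound on eLpNorm of derivative of v
  have hDv : eLpNorm (fderiv ℝ v) ((1:ℝ≥0) : ℝ≥0∞) μ ≤
      ENNReal.ofReal s * (J2 ^ ((1:ℝ)/2) * G ^ ((1:ℝ)/2)) := by
    rw [ENNReal.coe_one, eLpNorm_one_eq_lintegral_enorm]
    calc ∫⁻ x, (‖fderiv ℝ v x‖₊ : ℝ≥0∞) ∂μ
        ≤ ∫⁻ x, ENNReal.ofReal s *
            ((‖u x‖₊ : ℝ≥0∞) ^ (s-1) * (‖fderiv ℝ (⇑u) x‖₊ : ℝ≥0∞)) ∂μ := lintegral_mono hptd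
      _ = ENNReal.ofReal s *
            ∫⁻ x, (‖u x‖₊ : ℝ≥0∞) ^ (s-1) * (‖fderiv ℝ (⇑u) x‖₊ : ℝ≥0∞) ∂μ :=
          lintegral_const_mul' _ _ ENNReal.ofReal_ne_top
      _ ≤ ENNReal.ofReal s * (J2 ^ ((1:ℝ)/2) * G ^ ((1:ℝ)/2)) := by gcongr
  have hDvfin : eLpNorm (fderiv ℝ v) ((1:ℝ≥0) : ℝ≥0∞) μ ≠ ⊤ := by
    refine ne_top_of_le_ne_top ?_ hDv
    apply ENNReal.mul_ne_top ENNReal.ofReal_ne_top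
    exact ENNReal.mul_ne_top (ENNReal.rpow_ne_top_of_nonneg (by norm_num) hfin)
      (ENNReal.rpow_ne_top_of_nonneg (by norm_num) hGfin)
  have happ := sobolev_noncompact (d := 2) (by norm_num) hvsm (p := 1) (p' := 2)
    le_rfl two_ne_zero (by push_cast; norm_num) hNv hDvfin
  rw [show ((1:ℝ≥0):ℝ) = (1:ℝ) from NNReal.coe_one] at happ
  have hL : eLpNorm v ((2:ℝ≥0) : ℝ≥0∞) μ = X ^ ((1:ℝ)/2) := by
    rw [eLpNorm_nnreal_eq_lintegral two_ne_zero, hX]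
    have : ∀ x, (‖v x‖₊ : ℝ≥0∞) ^ ((2:ℝ≥0):ℝ) = (‖u x‖₊ : ℝ≥0∞) ^ (2*s) := by
      intro x
      rw [hvnn x, ← ENNReal.rpow_mul]
      norm_num
      ring_nf
    rw [show (∫⁻ x, ‖v x‖ₑ ^ ((2:ℝ≥0):ℝ) ∂μ) = _ from lintegral_congr this]
    norm_num
  rw [hL] at happ
  have h2 : X = (X ^ ((1:ℝ)/2)) ^ (2:ℝ) := by
    rw [← ENNReal.rpow_mul]; norm_num
  rw [h2]
  calc (X ^ ((1:ℝ)/2)) ^ (2:ℝ)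
      ≤ (C1 * (ENNReal.ofReal s * (J2 ^ ((1:ℝ)/2) * G ^ ((1:ℝ)/2)))) ^ (2:ℝ) := by
        refine ENNReal.rpow_le_rpow ?_ (by norm_num)
        refine happ.trans ?_
        gcongr
    _ = (C1 * ENNReal.ofReal s) ^ (2:ℝ) * J2 * G := by
        rw [show C1 * (ENNReal.ofReal s * (J2 ^ ((1:ℝ)/2) * G ^ ((1:ℝ)/2)))
            = (C1 * ENNReal.ofReal s) * (J2 ^ ((1:ℝ)/2) * G ^ ((1:ℝ)/2)) by ring]
        rw [ENNReal.mul_rpow_of_nonneg _ _ (by norm_num : (0:ℝ) ≤ 2)]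
        rw [ENNReal.mul_rpow_of_nonneg (J2 ^ ((1:ℝ)/2)) _ (by norm_num : (0:ℝ) ≤ 2)]
        rw [← ENNReal.rpow_mul J2, ← ENNReal.rpow_mul G]
        norm_num
        ring

/-- Conversion between Bochner integral of a real power of the norm and `lintegral`. -/
lemma integral_rpow_norm_eq_toReal {α F : Type*} [MeasurableSpace α] {μ : Measure α}
    [TopologicalSpace α] [OpensMeasurableSpace α] [NormedAddCommGroup F]
    {f : α → F} (hf : Continuous f) {q : ℝ} (hq : 0 ≤ q) :
    ∫ x, ‖f x‖ ^ q ∂μ = (∫⁻ x, (‖f x‖₊ : ℝ≥0∞) ^ q ∂μ).toReal := by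
  rw [integral_eq_lintegral_of_nonneg_ae (ae_of_all _ fun x => by positivity)
    ((hf.norm.rpow_const fun x => Or.inr hq).aestronglyMeasurable)]
  congr 1
  refine lintegral_congr fun x => ?_
  rw [← enorm_eq_nnnorm, ← ofReal_norm, ENNReal.ofReal_rpow_of_nonneg (norm_nonneg (f x)) hq]

/-- Core Gagliardo–Nirenberg inequality in `lintegral` form. -/
lemma gn_core (d : ℕ) (hd : d = 2 ∨ d = 3) (σ : ℝ) (hσ : 0 < σ) (hσ3 : d = 3 → σ < 2) :
    ∃ c0 : ℝ≥0∞, c0 ≠ ⊤ ∧ ∀ u : SchwartzMap (EuclideanSpace ℝ (Fin d)) ℂ,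
      ∫⁻ x, (‖u x‖₊ : ℝ≥0∞) ^ (2*σ+2) ∂volume ≤
        c0 * (∫⁻ x, (‖fderiv ℝ (⇑u) x‖₊ : ℝ≥0∞) ^ (2:ℝ) ∂volume) ^ ((d:ℝ) * σ / 2)
          * (∫⁻ x, (‖u x‖₊ : ℝ≥0∞) ^ (2:ℝ) ∂volume) ^ ((σ * (2 - (d:ℝ)) + 2) / 2) := by
  rcases hd with hd | hd
  · -- dimension 2
    subst hd
    set C1 := (SNormLESNormFDerivOfEqConst ℝ (volume : Measure (EuclideanSpace ℝ (Fin 2))) 1 : ℝ≥0∞)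
      with hC1
    have hC1top : C1 ≠ ⊤ := ENNReal.coe_ne_top
    have base : ∀ u : SchwartzMap (EuclideanSpace ℝ (Fin 2)) ℂ,
        ∫⁻ x, (‖u x‖₊ : ℝ≥0∞) ^ (4:ℝ) ∂volume ≤
          (C1 * ENNReal.ofReal 2) ^ (2:ℝ)
            * (∫⁻ x, (‖u x‖₊ : ℝ≥0∞) ^ (2:ℝ) ∂volume)
            * (∫⁻ x, (‖fderiv ℝ (⇑u) x‖₊ : ℝ≥0∞) ^ (2:ℝ) ∂volume) := by
      intro u
      have hfin : ∫⁻ x, (‖u x‖₊ : ℝ≥0∞) ^ (2*((2:ℝ)-1)) ∂volume ≠ ⊤ := by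
        refine ne_top_of_le_ne_top (schwartz_lintegral_rpow_lt_top u (r := 2) one_le_two)
          (le_of_eq (lintegral_congr fun x => by norm_num))
      have h := ladyzhenskaya u (s := 2) one_lt_two hfin
      calc ∫⁻ x, (‖u x‖₊ : ℝ≥0∞) ^ (4:ℝ) ∂volume
          = ∫⁻ x, (‖u x‖₊ : ℝ≥0∞) ^ (2*(2:ℝ)) ∂volume :=
            lintegral_congr fun x => by norm_num
        _ ≤ (C1 * ENNReal.ofReal 2) ^ (2:ℝ)
              * (∫⁻ x, (‖u x‖₊ : ℝ≥0∞) ^ (2*((2:ℝ)-1)) ∂volume)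
              * (∫⁻ x, (‖fderiv ℝ (⇑u) x‖₊ : ℝ≥0∞) ^ (2:ℝ) ∂volume) := h
        _ = (C1 * ENNReal.ofReal 2) ^ (2:ℝ)
              * (∫⁻ x, (‖u x‖₊ : ℝ≥0∞) ^ (2:ℝ) ∂volume)
              * (∫⁻ x, (‖fderiv ℝ (⇑u) x‖₊ : ℝ≥0∞) ^ (2:ℝ) ∂volume) := by
            congr 1
            congr 1
            exact lintegral_congr fun x => by norm_num
    rcases lt_trichotomy σ 1 with hσ1 | hσ1 | hσ1
    · -- σ < 1
      refine ⟨((C1 * ENNReal.ofReal 2) ^ (2:ℝ)) ^ σ, ?_, ?_⟩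
      · exact ENNReal.rpow_ne_top_of_nonneg hσ.le (ENNReal.rpow_ne_top_of_nonneg (by norm_num)
          (ENNReal.mul_ne_top hC1top ENNReal.ofReal_ne_top))
      intro u
      simp only [Nat.cast_ofNat]
      set G := ∫⁻ x, (‖fderiv ℝ (⇑u) x‖₊ : ℝ≥0∞) ^ (2:ℝ) ∂volume with hG
      set J2 := ∫⁻ x, (‖u x‖₊ : ℝ≥0∞) ^ (2:ℝ) ∂volume with hJ2
      have humeas : AEMeasurable (fun x => (‖u x‖₊ : ℝ≥0∞)) volume :=
        (ENNReal.continuous_coe.comp (u.continuous).nnnorm).measurable.aemeasurable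
      have hinterp := lintegral_rpow_interp (μ := volume) humeas
        (e1 := 4) (e2 := 2) (θ := σ) hσ hσ1 (by norm_num) (by norm_num)
      have hexp : σ * 4 + (1 - σ) * 2 = 2*σ+2 := by ring
      rw [hexp] at hinterp
      calc ∫⁻ x, (‖u x‖₊ : ℝ≥0∞) ^ (2*σ+2) ∂volume
          ≤ (∫⁻ x, (‖u x‖₊ : ℝ≥0∞) ^ (4:ℝ) ∂volume) ^ σ * J2 ^ (1-σ) := hinterp
        _ ≤ (((C1 * ENNReal.ofReal 2) ^ (2:ℝ)) * J2 * G) ^ σ * J2 ^ (1-σ) := by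
            gcongr
            exact base u
        _ = ((C1 * ENNReal.ofReal 2) ^ (2:ℝ)) ^ σ * G ^ ((2:ℝ) * σ / 2)
              * J2 ^ ((σ * (2 - (2:ℝ)) + 2) / 2) := by
            rw [ENNReal.mul_rpow_of_nonneg _ _ hσ.le, ENNReal.mul_rpow_of_nonneg _ _ hσ.le]
            have h1 : (2:ℝ) * σ / 2 = σ := by ring
            have h2 : (σ * (2 - (2:ℝ)) + 2) / 2 = σ + (1 - σ) := by ring
            rw [h1, h2, ENNReal.rpow_add_of_nonneg _ _ hσ.le (by linarith)]
            ring
    · -- σ = 1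
      subst hσ1
      refine ⟨(C1 * ENNReal.ofReal 2) ^ (2:ℝ), ENNReal.rpow_ne_top_of_nonneg (by norm_num)
        (ENNReal.mul_ne_top hC1top ENNReal.ofReal_ne_top), fun u => ?_⟩
      simp only [Nat.cast_ofNat]
      have h := base u
      calc ∫⁻ x, (‖u x‖₊ : ℝ≥0∞) ^ (2*(1:ℝ)+2) ∂volume
          = ∫⁻ x, (‖u x‖₊ : ℝ≥0∞) ^ (4:ℝ) ∂volume := lintegral_congr fun x => by norm_num
        _ ≤ (C1 * ENNReal.ofReal 2) ^ (2:ℝ)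
              * (∫⁻ x, (‖u x‖₊ : ℝ≥0∞) ^ (2:ℝ) ∂volume)
              * (∫⁻ x, (‖fderiv ℝ (⇑u) x‖₊ : ℝ≥0∞) ^ (2:ℝ) ∂volume) := h
        _ = (C1 * ENNReal.ofReal 2) ^ (2:ℝ)
              * (∫⁻ x, (‖fderiv ℝ (⇑u) x‖₊ : ℝ≥0∞) ^ (2:ℝ) ∂volume) ^ ((2:ℝ) * 1 / 2)
              * (∫⁻ x, (‖u x‖₊ : ℝ≥0∞) ^ (2:ℝ) ∂volume) ^ (((1:ℝ) * (2 - (2:ℝ)) + 2) / 2) := by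
            rw [show ((2:ℝ) * 1 / 2) = (1:ℝ) by norm_num,
              show (((1:ℝ) * (2 - (2:ℝ)) + 2) / 2) = (1:ℝ) by norm_num,
              ENNReal.rpow_one, ENNReal.rpow_one]
            ring
    · -- σ > 1
      set s : ℝ := σ + 1 with hsdef
      have hs1 : 1 < s := by rw [hsdef]; linarith
      refine ⟨((C1 * ENNReal.ofReal s) ^ (2:ℝ)) ^ σ, ?_, ?_⟩
      · exact ENNReal.rpow_ne_top_of_nonneg hσ.le (ENNReal.rpow_ne_top_of_nonneg (by norm_num)
          (ENNReal.mul_ne_top hC1top ENNReal.ofReal_ne_top))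
      intro u
      simp only [Nat.cast_ofNat]
      set G := ∫⁻ x, (‖fderiv ℝ (⇑u) x‖₊ : ℝ≥0∞) ^ (2:ℝ) ∂volume with hG
      set J2 := ∫⁻ x, (‖u x‖₊ : ℝ≥0∞) ^ (2:ℝ) ∂volume with hJ2
      set X := ∫⁻ x, (‖u x‖₊ : ℝ≥0∞) ^ (2*σ+2) ∂volume with hX
      have hXfin : X ≠ ⊤ := schwartz_lintegral_rpow_lt_top u (by linarith)
      by_cases hX0 : X = 0
      · rw [hX0]; exact zero_le
      have humeas : AEMeasurable (fun x => (‖u x‖₊ : ℝ≥0∞)) volume :=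
        (ENNReal.continuous_coe.comp (u.continuous).nnnorm).measurable.aemeasurable
      have hfin : ∫⁻ x, (‖u x‖₊ : ℝ≥0∞) ^ (2*(s-1)) ∂volume ≠ ⊤ := by
        refine ne_top_of_le_ne_top (schwartz_lintegral_rpow_lt_top u
          (r := 2*σ) (by linarith)) (le_of_eq (lintegral_congr fun x => by
            rw [hsdef]; norm_num))
      have hlad := ladyzhenskaya u hs1 hfin
      -- interpolation for the middle exponent
      have hθpos : 0 < (σ-1)/σ := div_pos (by linarith) hσ
      have hθlt : (σ-1)/σ < 1 := by
        rw [div_lt_one hσ]; linarith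
      have hinterp := lintegral_rpow_interp (μ := volume) humeas
        (e1 := 2*σ+2) (e2 := 2) (θ := (σ-1)/σ) hθpos hθlt (by linarith) (by norm_num)
      have hexp : (σ-1)/σ * (2*σ+2) + (1 - (σ-1)/σ) * 2 = 2*(s-1) := by
        rw [hsdef]
        field_simp
        ring
      rw [hexp] at hinterp
      have hexp2 : 1 - (σ-1)/σ = 1/σ := by
        field_simp
        ring
      rw [hexp2] at hinterp
      -- combine
      have hkey : X ≤ (C1 * ENNReal.ofReal s) ^ (2:ℝ) * (X ^ ((σ-1)/σ) * J2 ^ (1/σ)) * G := by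
        calc X = ∫⁻ x, (‖u x‖₊ : ℝ≥0∞) ^ (2*s) ∂volume := by
              refine lintegral_congr fun x => ?_
              rw [hsdef]
              congr 1
              ring
          _ ≤ (C1 * ENNReal.ofReal s) ^ (2:ℝ)
                * (∫⁻ x, (‖u x‖₊ : ℝ≥0∞) ^ (2*(s-1)) ∂volume) * G := hlad
          _ ≤ (C1 * ENNReal.ofReal s) ^ (2:ℝ) * (X ^ ((σ-1)/σ) * J2 ^ (1/σ)) * G := by
              gcongr
      have hXθfin : X ^ ((σ-1)/σ) ≠ ⊤ := ENNReal.rpow_ne_top_of_nonneg hθpos.le hXfin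
      have hXθ0 : X ^ ((σ-1)/σ) ≠ 0 := by
        simp only [ne_eq, ENNReal.rpow_eq_zero_iff, not_or]
        constructor
        · rintro ⟨h, -⟩; exact hX0 h
        · rintro ⟨h, -⟩; exact hXfin h
      have hcancel : X ^ ((1:ℝ)/σ) ≤ (C1 * ENNReal.ofReal s) ^ (2:ℝ) * J2 ^ (1/σ) * G := by
        rw [← ENNReal.mul_le_mul_iff_right hXθ0 hXθfin]
        calc X ^ ((σ-1)/σ) * X ^ ((1:ℝ)/σ)
            = X := by
              rw [← ENNReal.rpow_add _ _ hX0 hXfin]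
              rw [show (σ-1)/σ + 1/σ = 1 by field_simp; ring]
              exact ENNReal.rpow_one X
          _ ≤ (C1 * ENNReal.ofReal s) ^ (2:ℝ) * (X ^ ((σ-1)/σ) * J2 ^ (1/σ)) * G := hkey
          _ = X ^ ((σ-1)/σ) * ((C1 * ENNReal.ofReal s) ^ (2:ℝ) * J2 ^ (1/σ) * G) := by ring
      have hfinal : X ≤ ((C1 * ENNReal.ofReal s) ^ (2:ℝ) * J2 ^ (1/σ) * G) ^ σ := by
        have h1 : X = (X ^ ((1:ℝ)/σ)) ^ σ := by
          rw [← ENNReal.rpow_mul]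
          rw [show (1:ℝ)/σ * σ = 1 by field_simp]
          exact (ENNReal.rpow_one X).symm
        rw [h1]
        exact ENNReal.rpow_le_rpow hcancel hσ.le
      refine hfinal.trans (le_of_eq ?_)
      rw [ENNReal.mul_rpow_of_nonneg _ _ hσ.le, ENNReal.mul_rpow_of_nonneg _ _ hσ.le,
        ← ENNReal.rpow_mul J2]
      rw [show (1:ℝ)/σ * σ = 1 by field_simp, ENNReal.rpow_one,
        show (2:ℝ) * σ / 2 = σ by ring,
        show (σ * (2 - (2:ℝ)) + 2) / 2 = 1 by ring, ENNReal.rpow_one]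
      ring
  · -- dimension 3
    subst hd
    have hσ2 : σ < 2 := hσ3 rfl
    set C3 := (SNormLESNormFDerivOfEqConst ℂ (volume : Measure (EuclideanSpace ℝ (Fin 3))) 2 : ℝ≥0∞)
      with hC3
    refine ⟨(C3 ^ (6:ℝ)) ^ (σ/2), ?_, ?_⟩
    · exact ENNReal.rpow_ne_top_of_nonneg (by positivity)
        (ENNReal.rpow_ne_top_of_nonneg (by norm_num) ENNReal.coe_ne_top)
    intro u
    simp only [Nat.cast_ofNat]
    set G := ∫⁻ x, (‖fderiv ℝ (⇑u) x‖₊ : ℝ≥0∞) ^ (2:ℝ) ∂volume with hG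
    set J2 := ∫⁻ x, (‖u x‖₊ : ℝ≥0∞) ^ (2:ℝ) ∂volume with hJ2
    have humeas : AEMeasurable (fun x => (‖u x‖₊ : ℝ≥0∞)) volume :=
      (ENNReal.continuous_coe.comp (u.continuous).nnnorm).measurable.aemeasurable
    have hθpos : 0 < σ/2 := by positivity
    have hθlt : σ/2 < 1 := by linarith
    have hinterp := lintegral_rpow_interp (μ := volume) humeas
      (e1 := 6) (e2 := 2) (θ := σ/2) hθpos hθlt (by norm_num) (by norm_num)
    have hexp : σ/2 * 6 + (1 - σ/2) * 2 = 2*σ+2 := by ring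
    rw [hexp] at hinterp
    calc ∫⁻ x, (‖u x‖₊ : ℝ≥0∞) ^ (2*σ+2) ∂volume
        ≤ (∫⁻ x, (‖u x‖₊ : ℝ≥0∞) ^ (6:ℝ) ∂volume) ^ (σ/2) * J2 ^ (1 - σ/2) := hinterp
      _ ≤ (C3 ^ (6:ℝ) * G ^ (3:ℝ)) ^ (σ/2) * J2 ^ (1 - σ/2) := by
          gcongr
          exact sobolev_d3 u
      _ = (C3 ^ (6:ℝ)) ^ (σ/2) * G ^ ((3:ℝ) * σ / 2) * J2 ^ ((σ * (2 - (3:ℝ)) + 2) / 2) := by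
          rw [ENNReal.mul_rpow_of_nonneg _ _ hθpos.le, ← ENNReal.rpow_mul G]
          rw [show (3:ℝ) * (σ/2) = (3:ℝ) * σ / 2 by ring,
            show (σ * (2 - (3:ℝ)) + 2) / 2 = 1 - σ/2 by ring]

/-- Gagliardo–Nirenberg inequality in dimension `d = 2` or `3`:
`‖u‖_{2σ+2}^{2σ+2} ≤ C ‖∇u‖₂^{dσ} ‖u‖₂^{σ(2−d)+2}` for Schwartz `u`. -/
theorem gagliardo_nirenberg (d : ℕ) (hd : d = 2 ∨ d = 3) (σ : ℝ) (hσ : 0 < σ)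
    (hσ3 : d = 3 → σ < 2) :
    ∃ C : ℝ, 0 < C ∧ ∀ u : SchwartzMap (EuclideanSpace ℝ (Fin d)) ℂ,
      (∫ x, ‖u x‖ ^ (2 * σ + 2)) ≤
        C * (∫ x, ‖fderiv ℝ (⇑u) x‖ ^ 2) ^ ((d : ℝ) * σ / 2)
          * (∫ x, ‖u x‖ ^ 2) ^ ((σ * (2 - (d : ℝ)) + 2) / 2) := by
  obtain ⟨c0, hc0top, hcore⟩ := gn_core d hd σ hσ hσ3
  refine ⟨c0.toReal + 1, by positivity, fun u => ?_⟩
  set Jq := ∫⁻ x, (‖u x‖₊ : ℝ≥0∞) ^ (2*σ+2) ∂volume with hJq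
  set G := ∫⁻ x, (‖fderiv ℝ (⇑u) x‖₊ : ℝ≥0∞) ^ (2:ℝ) ∂volume with hG
  set J2 := ∫⁻ x, (‖u x‖₊ : ℝ≥0∞) ^ (2:ℝ) ∂volume with hJ2
  have hJqfin : Jq ≠ ⊤ := schwartz_lintegral_rpow_lt_top (μ := volume) u (by linarith)
  have hGfin : G ≠ ⊤ := by
    refine ne_top_of_le_ne_top (schwartz_lintegral_rpow_lt_top (μ := volume)
      (SchwartzMap.fderivCLM ℝ _ _ u) (r := 2) one_le_two) (le_of_eq ?_)
    exact lintegral_congr fun x => by rw [SchwartzMap.fderivCLM_apply]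
  have hJ2fin : J2 ≠ ⊤ := schwartz_lintegral_rpow_lt_top (μ := volume) u (by norm_num)
  have he1 : (0:ℝ) ≤ (d:ℝ) * σ / 2 := by positivity
  have he2 : (0:ℝ) ≤ (σ * (2 - (d:ℝ)) + 2) / 2 := by
    rcases hd with h | h
    · subst h; push_cast; nlinarith
    · subst h; push_cast; have := hσ3 rfl; nlinarith
  have hnat : ∀ (g : EuclideanSpace ℝ (Fin d) → ℝ), (fun x => g x ^ (2:ℕ)) =
      (fun x => g x ^ ((2:ℝ))) := by
    intro g; funext x
    rw [← Real.rpow_natCast (g x) 2]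
    norm_num
  have e1 : (∫ x, ‖u x‖ ^ (2*σ+2)) = Jq.toReal :=
    integral_rpow_norm_eq_toReal u.continuous (by linarith)
  have e2 : (∫ x, ‖fderiv ℝ (⇑u) x‖ ^ (2:ℕ)) = G.toReal := by
    have := hnat (fun x => ‖fderiv ℝ (⇑u) x‖)
    calc (∫ x, ‖fderiv ℝ (⇑u) x‖ ^ (2:ℕ))
        = ∫ x, ‖fderiv ℝ (⇑u) x‖ ^ ((2:ℝ)) := by rw [← this]
      _ = G.toReal := integral_rpow_norm_eq_toReal
          ((u.smooth 1).continuous_fderiv (by simp)) (by norm_num)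
  have e3 : (∫ x, ‖u x‖ ^ (2:ℕ)) = J2.toReal := by
    have := hnat (fun x => ‖u x‖)
    calc (∫ x, ‖u x‖ ^ (2:ℕ))
        = ∫ x, ‖u x‖ ^ ((2:ℝ)) := by rw [← this]
      _ = J2.toReal := integral_rpow_norm_eq_toReal u.continuous (by norm_num)
  rw [e1, e2, e3]
  have hRfin : c0 * G ^ ((d:ℝ) * σ / 2) * J2 ^ ((σ * (2 - (d:ℝ)) + 2) / 2) ≠ ⊤ :=
    ENNReal.mul_ne_top (ENNReal.mul_ne_top hc0top
      (ENNReal.rpow_ne_top_of_nonneg he1 hGfin)) (ENNReal.rpow_ne_top_of_nonneg he2 hJ2fin)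
  calc Jq.toReal
      ≤ (c0 * G ^ ((d:ℝ) * σ / 2) * J2 ^ ((σ * (2 - (d:ℝ)) + 2) / 2)).toReal :=
        ENNReal.toReal_mono hRfin (hcore u)
    _ = c0.toReal * G.toReal ^ ((d:ℝ) * σ / 2) * J2.toReal ^ ((σ * (2 - (d:ℝ)) + 2) / 2) := by
        rw [ENNReal.toReal_mul, ENNReal.toReal_mul, ← ENNReal.toReal_rpow, ← ENNReal.toReal_rpow]
    _ ≤ (c0.toReal + 1) * G.toReal ^ ((d:ℝ) * σ / 2)
          * J2.toReal ^ ((σ * (2 - (d:ℝ)) + 2) / 2) := by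
        have h1 : (0:ℝ) ≤ G.toReal ^ ((d:ℝ) * σ / 2) := by positivity
        have h2 : (0:ℝ) ≤ J2.toReal ^ ((σ * (2 - (d:ℝ)) + 2) / 2) := by positivity
        nlinarith [ENNReal.toReal_nonneg (a := c0)]
end

section
/- Let d = 2 or d = 3, λ > 0, and σ > 2/d. Let V : ℝ^d → ℝ be continuous with 0 ≤ V(x) ≤ C₀(1+|x|²)^{k/2} for all x ∈ ℝ^d, for some constants C₀, k > 0. Then for every Schwartz function u : ℝ^d → ℂ with u not identically zero, E(u_s) → −∞ as s → +∞, where u_s(x) := s^{d/2} u(sx). In particular the energy E is unbounded from below on the set of functions with fixed mass and fixed angular momentum. -/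
open MeasureTheory Real Complex Filter

noncomputable section

/-- The energy functional
`E(u) = ∫ (1/2)|∇u|² + V|u|² − (λ/(σ+1))|u|^{2σ+2}`. -/
def energy {d : ℕ} (V : EuclideanSpace ℝ (Fin d) → ℝ) (lam σ : ℝ)
    (u : EuclideanSpace ℝ (Fin d) → ℂ) : ℝ :=
  ∫ x, (1 / 2 : ℝ) * ‖fderiv ℝ u x‖ ^ 2 + V x * ‖u x‖ ^ 2
    - (lam / (σ + 1)) * ‖u x‖ ^ (2 * σ + 2)

/-- The scaling `u_s(x) = s^{d/2} u(s x)`. -/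
def scl {d : ℕ} (s : ℝ) (u : EuclideanSpace ℝ (Fin d) → ℂ) :
    EuclideanSpace ℝ (Fin d) → ℂ :=
  fun x => ((s ^ ((d : ℝ) / 2) : ℝ) : ℂ) * u (s • x)

namespace EnergyAux

variable {d : ℕ}

local notation "E" => EuclideanSpace ℝ (Fin d)

/-! ### Integrability lemmas for Schwartz functions -/

lemma integrable_sq_norm {F : Type*} [NormedAddCommGroup F] [NormedSpace ℝ F]
    (f : SchwartzMap E F) : Integrable (fun x : E => ‖f x‖ ^ 2) := by
  have hC : ∀ x : E, ‖f x‖ ≤ SchwartzMap.seminorm ℝ 0 0 f := fun x => f.norm_le_seminorm ℝ x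
  refine ((f.integrable (μ := volume)).norm.const_mul (SchwartzMap.seminorm ℝ 0 0 f)).mono'
    ?_ ?_
  · exact (f.continuous.norm.pow 2).aestronglyMeasurable
  · filter_upwards with x
    have h0 : (0:ℝ) ≤ ‖f x‖ := norm_nonneg _
    rw [Real.norm_of_nonneg (by positivity)]
    calc ‖f x‖ ^ 2 = ‖f x‖ * ‖f x‖ := sq ‖f x‖
      _ ≤ SchwartzMap.seminorm ℝ 0 0 f * ‖f x‖ := by gcongr; exact hC x

lemma integrable_rpow_norm {F : Type*} [NormedAddCommGroup F] [NormedSpace ℝ F]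
    (f : SchwartzMap E F) {r : ℝ} (hr : 1 ≤ r) :
    Integrable (fun x : E => ‖f x‖ ^ r) := by
  set B : ℝ := max (SchwartzMap.seminorm ℝ 0 0 f) 1 with hB
  have hB1 : (1:ℝ) ≤ B := le_max_right _ _
  have hfB : ∀ x : E, ‖f x‖ ≤ B := fun x => (f.norm_le_seminorm ℝ x).trans (le_max_left _ _)
  refine ((f.integrable (μ := volume)).norm.const_mul (B ^ (r - 1))).mono' ?_ ?_
  · exact (f.continuous.norm.rpow_const (fun x => Or.inr (by linarith))).aestronglyMeasurable
  · filter_upwards with x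
    have h0 : (0:ℝ) ≤ ‖f x‖ := norm_nonneg _
    rw [Real.norm_of_nonneg (by positivity)]
    have : ‖f x‖ ^ r = ‖f x‖ ^ (r - 1) * ‖f x‖ ^ (1:ℝ) := by
      rw [← Real.rpow_add' h0 (by ring_nf; linarith)]
      ring_nf
    rw [this, Real.rpow_one]
    exact mul_le_mul_of_nonneg_right (Real.rpow_le_rpow h0 (hfB x) (by linarith)) h0

lemma integrable_poly_mul_sq_norm {F : Type*} [NormedAddCommGroup F] [NormedSpace ℝ F]
    (f : SchwartzMap E F) {c : ℝ} (hc : 0 ≤ c) :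
    Integrable (fun x : E => (1 + ‖x‖ ^ 2) ^ c * ‖f x‖ ^ 2) := by
  set K : ℕ := ⌈2 * c⌉₊ with hK
  set C : ℝ := SchwartzMap.seminorm ℝ 0 0 f with hCdef
  have hC0 : 0 ≤ C := apply_nonneg _ _
  have hfC : ∀ x : E, ‖f x‖ ≤ C := fun x => f.norm_le_seminorm ℝ x
  have key : ∀ x : E, (1 + ‖x‖ ^ 2) ^ c * ‖f x‖ ^ 2
      ≤ 2 ^ K * C * (‖f x‖ + ‖x‖ ^ K * ‖f x‖) := by
    intro x
    set t : ℝ := ‖x‖ with ht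
    have ht0 : 0 ≤ t := norm_nonneg _
    have h1 : (1 + t ^ 2) ^ c ≤ (1 + t) ^ (K:ℝ) := by
      calc (1 + t ^ 2) ^ c ≤ ((1 + t) ^ (2:ℕ)) ^ c := by
            apply Real.rpow_le_rpow (by positivity) (by nlinarith) hc
        _ = (1 + t) ^ (2 * c) := by
            rw [← Real.rpow_natCast (1+t) 2, ← Real.rpow_mul (by positivity)]
            norm_num
        _ ≤ (1 + t) ^ (K:ℝ) := by
            apply Real.rpow_le_rpow_of_exponent_le (by linarith) (Nat.le_ceil _)
    have h2 : (1 + t) ^ (K:ℝ) ≤ 2 ^ K * (1 + t ^ K) := by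
      rw [Real.rpow_natCast]
      rcases le_total t 1 with h | h
      · calc (1 + t) ^ K ≤ (2:ℝ) ^ K := by gcongr; linarith
          _ ≤ 2 ^ K * (1 + t ^ K) := by
              nlinarith [pow_nonneg ht0 K, pow_pos (by norm_num : (0:ℝ) < 2) K]
      · calc (1 + t) ^ K ≤ (2 * t) ^ K := by gcongr; linarith
          _ = 2 ^ K * t ^ K := mul_pow 2 t K
          _ ≤ 2 ^ K * (1 + t ^ K) := by
              have : (0:ℝ) < 2 ^ K := by positivity
              nlinarith
    have h3 : ‖f x‖ ^ 2 ≤ C * ‖f x‖ := by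
      rw [sq]; gcongr; exact hfC x
    calc (1 + t ^ 2) ^ c * ‖f x‖ ^ 2 ≤ (2 ^ K * (1 + t ^ K)) * (C * ‖f x‖) := by
          apply mul_le_mul (h1.trans h2) h3 (by positivity)
          positivity
      _ = 2 ^ K * C * (‖f x‖ + t ^ K * ‖f x‖) := by ring
  refine (((f.integrable (μ := volume)).norm.add
      (f.integrable_pow_mul volume K)).const_mul (2 ^ K * C)).mono' ?_ ?_
  · apply Continuous.aestronglyMeasurable
    have : Continuous fun x : E => (1 + ‖x‖ ^ 2) ^ c := by
      apply Continuous.rpow_const (by continuity)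
      intro x; right; exact hc
    exact this.mul (f.continuous.norm.pow 2)
  · filter_upwards with x
    rw [Real.norm_of_nonneg (by positivity)]
    exact key x

/-! ### The scaled function as a Schwartz map, and pointwise identities -/

def sclSchwartz (s : ℝ) (hs : 0 < s) (u : SchwartzMap E ℂ) : SchwartzMap E ℂ :=
  (((s ^ ((d : ℝ) / 2) : ℝ) : ℂ)) •
    (SchwartzMap.compCLMOfContinuousLinearEquiv ℝ
      ((LinearEquiv.smulOfNeZero ℝ E s hs.ne').toContinuousLinearEquiv) u)

lemma sclSchwartz_coe (s : ℝ) (hs : 0 < s) (u : SchwartzMap E ℂ) :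
    ⇑(sclSchwartz s hs u) = scl s ⇑u := by
  ext x
  simp only [sclSchwartz, SchwartzMap.smul_apply, scl]
  rw [SchwartzMap.compCLMOfContinuousLinearEquiv_apply]
  simp only [Function.comp_apply, smul_eq_mul]
  rfl

lemma continuous_scl (s : ℝ) (u : SchwartzMap E ℂ) : Continuous (scl s (⇑u)) :=
  continuous_const.mul (u.continuous.comp (continuous_const_smul s))

lemma norm_scl (s : ℝ) (hs : 0 < s) (u : SchwartzMap E ℂ) (x : E) :
    ‖scl s (⇑u) x‖ = s ^ ((d : ℝ) / 2) * ‖u (s • x)‖ := by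
  simp [scl, Complex.norm_real, _root_.abs_of_nonneg (Real.rpow_nonneg hs.le _)]

lemma norm_fderiv_scl (s : ℝ) (hs : 0 < s) (u : SchwartzMap E ℂ) (x : E) :
    ‖fderiv ℝ (scl s (⇑u)) x‖ = s ^ ((d : ℝ) / 2) * (s * ‖fderiv ℝ (⇑u) (s • x)‖) := by
  have hdiff : DifferentiableAt ℝ (fun y : E => u (s • y)) x := by
    apply (u.differentiable.differentiableAt).comp
    exact (differentiable_id.const_smul s).differentiableAt
  have h1 : fderiv ℝ (scl s (⇑u)) x
      = ((s ^ ((d : ℝ) / 2) : ℝ) : ℂ) • fderiv ℝ (fun y : E => u (s • y)) x := by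
    unfold scl
    exact fderiv_const_mul hdiff _
  have h2 : fderiv ℝ (fun y : E => u (s • y)) x
      = (fderiv ℝ (⇑u) (s • x)).comp (s • ContinuousLinearMap.id ℝ E) := by
    have : (fun y : E => u (s • y)) = ⇑u ∘ ⇑(s • ContinuousLinearMap.id ℝ E) := by
      ext y; simp
    rw [this, fderiv_comp x (u.differentiable.differentiableAt) ?_,
      ContinuousLinearMap.fderiv]
    · simp
    · exact (s • ContinuousLinearMap.id ℝ E).differentiableAt
  have h3 : (fderiv ℝ (⇑u) (s • x)).comp (s • ContinuousLinearMap.id ℝ E)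
      = s • fderiv ℝ (⇑u) (s • x) := by
    ext y; simp
  rw [h1, h2, h3]
  rw [norm_smul ((s ^ ((d:ℝ)/2) : ℝ) : ℂ) (s • fderiv ℝ (⇑u) (s • x)),
    norm_smul s (fderiv ℝ (⇑u) (s • x))]
  simp only [Complex.norm_real, norm_norm, Real.norm_eq_abs,
    _root_.abs_of_nonneg (Real.rpow_nonneg hs.le ((d:ℝ)/2)), _root_.abs_of_nonneg hs.le]

/-! ### Scaling identities for the integrals -/

lemma pow_half_sq {s : ℝ} (hs : 0 < s) : (s ^ ((d : ℝ) / 2)) ^ 2 = s ^ d := by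
  rw [← Real.rpow_natCast (s ^ ((d : ℝ) / 2)) 2, ← Real.rpow_mul hs.le,
    ← Real.rpow_natCast s d]
  norm_num

lemma integral_grad_scl {s : ℝ} (hs : 0 < s) (u : SchwartzMap E ℂ) :
    ∫ x : E, ‖fderiv ℝ (scl s (⇑u)) x‖ ^ 2
      = s ^ 2 * ∫ x : E, ‖fderiv ℝ (⇑u) x‖ ^ 2 := by
  have h1 : ∀ x : E, ‖fderiv ℝ (scl s (⇑u)) x‖ ^ 2
      = (s ^ ((d : ℝ) / 2) * s) ^ 2 * (fun y : E => ‖fderiv ℝ (⇑u) y‖ ^ 2) (s • x) := by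
    intro x
    rw [norm_fderiv_scl s hs u x]
    ring
  rw [integral_congr_ae (Filter.Eventually.of_forall h1), integral_const_mul,
    Measure.integral_comp_smul_of_nonneg volume (fun y : E => ‖fderiv ℝ (⇑u) y‖ ^ 2) s
      (hR := hs.le), finrank_euclideanSpace_fin, smul_eq_mul]
  rw [mul_pow, pow_half_sq hs]
  have hsd : (0:ℝ) < s ^ d := by positivity
  field_simp

lemma integral_rpow_scl {s : ℝ} (hs : 0 < s) (u : SchwartzMap E ℂ) (σ : ℝ) :
    ∫ x : E, ‖scl s (⇑u) x‖ ^ (2 * σ + 2)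
      = s ^ ((d : ℝ) * σ) * ∫ x : E, ‖u x‖ ^ (2 * σ + 2) := by
  have h1 : ∀ x : E, ‖scl s (⇑u) x‖ ^ (2 * σ + 2)
      = (s ^ ((d : ℝ) / 2)) ^ (2 * σ + 2) * (fun y : E => ‖u y‖ ^ (2 * σ + 2)) (s • x) := by
    intro x
    rw [norm_scl s hs u x, Real.mul_rpow (Real.rpow_nonneg hs.le _) (norm_nonneg _)]
  rw [integral_congr_ae (Filter.Eventually.of_forall h1), integral_const_mul,
    Measure.integral_comp_smul_of_nonneg volume (fun y : E => ‖u y‖ ^ (2 * σ + 2)) s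
      (hR := hs.le), finrank_euclideanSpace_fin, smul_eq_mul]
  rw [← mul_assoc]
  congr 1
  rw [← Real.rpow_natCast s d, ← Real.rpow_mul hs.le, ← Real.rpow_neg hs.le,
    ← Real.rpow_add hs]
  congr 1
  ring

/-! ### Potential term bound -/

lemma integrable_V_mul {s : ℝ} (hs : 1 ≤ s) (u : SchwartzMap E ℂ)
    (V : E → ℝ) (hVc : Continuous V) {C₀ k : ℝ} (hC₀ : 0 < C₀) (hk : 0 < k)
    (hV : ∀ x : E, 0 ≤ V x ∧ V x ≤ C₀ * (1 + ‖x‖ ^ 2) ^ (k / 2)) :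
    Integrable (fun x : E => V x * ‖scl s (⇑u) x‖ ^ 2) := by
  have hs0 : (0:ℝ) < s := lt_of_lt_of_le one_pos hs
  set F : E → ℝ := fun y => C₀ * ((1 + ‖y‖ ^ 2) ^ (k / 2) * ‖u y‖ ^ 2) with hF
  have hFint : Integrable F := (integrable_poly_mul_sq_norm u (by positivity)).const_mul C₀
  have hFcomp : Integrable (fun x : E => F (s • x)) := hFint.comp_smul hs0.ne'
  have key : ∀ x : E, V x * ‖scl s (⇑u) x‖ ^ 2 ≤ s ^ d * F (s • x) := by
    intro x
    have h1 : ‖scl s (⇑u) x‖ ^ 2 = s ^ d * ‖u (s • x)‖ ^ 2 := by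
      rw [norm_scl s hs0 u x, mul_pow, pow_half_sq hs0]
    have hxs : ‖x‖ ≤ ‖s • x‖ := by
      rw [norm_smul, Real.norm_eq_abs, _root_.abs_of_nonneg hs0.le]
      nlinarith [norm_nonneg x]
    have h2 : V x ≤ C₀ * (1 + ‖s • x‖ ^ 2) ^ (k / 2) := by
      refine (hV x).2.trans ?_
      have : (1 + ‖x‖ ^ 2) ^ (k / 2) ≤ (1 + ‖s • x‖ ^ 2) ^ (k / 2) := by
        apply Real.rpow_le_rpow (by positivity) (by nlinarith [norm_nonneg x, norm_nonneg (s • x)]) (by positivity)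
      nlinarith [Real.rpow_nonneg (by positivity : (0:ℝ) ≤ 1 + ‖x‖^2) (k/2)]
    calc V x * ‖scl s (⇑u) x‖ ^ 2 = V x * (s ^ d * ‖u (s • x)‖ ^ 2) := by rw [h1]
      _ ≤ (C₀ * (1 + ‖s • x‖ ^ 2) ^ (k / 2)) * (s ^ d * ‖u (s • x)‖ ^ 2) := by
          apply mul_le_mul_of_nonneg_right h2 (by positivity)
      _ = s ^ d * F (s • x) := by rw [hF]; ring
  refine (hFcomp.const_mul (s ^ d)).mono' ?_ ?_
  · exact (hVc.mul ((continuous_scl s u).norm.pow 2)).aestronglyMeasurable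
  · filter_upwards with x
    rw [Real.norm_of_nonneg (mul_nonneg (hV x).1 (by positivity))]
    exact key x

lemma integral_potential_le {s : ℝ} (hs : 1 ≤ s) (u : SchwartzMap E ℂ)
    (V : E → ℝ) (hVc : Continuous V) {C₀ k : ℝ} (hC₀ : 0 < C₀) (hk : 0 < k)
    (hV : ∀ x : E, 0 ≤ V x ∧ V x ≤ C₀ * (1 + ‖x‖ ^ 2) ^ (k / 2)) :
    ∫ x : E, V x * ‖scl s (⇑u) x‖ ^ 2
      ≤ C₀ * ∫ y : E, (1 + ‖y‖ ^ 2) ^ (k / 2) * ‖u y‖ ^ 2 := by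
  have hs0 : (0:ℝ) < s := lt_of_lt_of_le one_pos hs
  set F : E → ℝ := fun y => C₀ * ((1 + ‖y‖ ^ 2) ^ (k / 2) * ‖u y‖ ^ 2) with hF
  have hFint : Integrable F := (integrable_poly_mul_sq_norm u (by positivity)).const_mul C₀
  have hFcomp : Integrable (fun x : E => F (s • x)) := hFint.comp_smul hs0.ne'
  have key : ∀ x : E, V x * ‖scl s (⇑u) x‖ ^ 2 ≤ s ^ d * F (s • x) := by
    intro x
    have h1 : ‖scl s (⇑u) x‖ ^ 2 = s ^ d * ‖u (s • x)‖ ^ 2 := by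
      rw [norm_scl s hs0 u x, mul_pow, pow_half_sq hs0]
    have hxs : ‖x‖ ≤ ‖s • x‖ := by
      rw [norm_smul, Real.norm_eq_abs, _root_.abs_of_nonneg hs0.le]
      nlinarith [norm_nonneg x]
    have h2 : V x ≤ C₀ * (1 + ‖s • x‖ ^ 2) ^ (k / 2) := by
      refine (hV x).2.trans ?_
      have : (1 + ‖x‖ ^ 2) ^ (k / 2) ≤ (1 + ‖s • x‖ ^ 2) ^ (k / 2) := by
        apply Real.rpow_le_rpow (by positivity) (by nlinarith [norm_nonneg x, norm_nonneg (s • x)]) (by positivity)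
      nlinarith [Real.rpow_nonneg (by positivity : (0:ℝ) ≤ 1 + ‖x‖^2) (k/2)]
    calc V x * ‖scl s (⇑u) x‖ ^ 2 = V x * (s ^ d * ‖u (s • x)‖ ^ 2) := by rw [h1]
      _ ≤ (C₀ * (1 + ‖s • x‖ ^ 2) ^ (k / 2)) * (s ^ d * ‖u (s • x)‖ ^ 2) := by
          apply mul_le_mul_of_nonneg_right h2 (by positivity)
      _ = s ^ d * F (s • x) := by rw [hF]; ring
  have hint1 : Integrable (fun x : E => V x * ‖scl s (⇑u) x‖ ^ 2) :=
    integrable_V_mul hs u V hVc hC₀ hk hV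
  calc ∫ x : E, V x * ‖scl s (⇑u) x‖ ^ 2 ≤ ∫ x : E, s ^ d * F (s • x) := by
        apply integral_mono hint1 (hFcomp.const_mul _) key
    _ = s ^ d * ((s ^ d : ℝ)⁻¹ • ∫ y : E, F y) := by
        rw [integral_const_mul,
          Measure.integral_comp_smul_of_nonneg volume F s (hR := hs0.le),
          finrank_euclideanSpace_fin]
    _ = ∫ y : E, F y := by
        rw [smul_eq_mul, ← mul_assoc, mul_inv_cancel₀ (by positivity), one_mul]
    _ = C₀ * ∫ y : E, (1 + ‖y‖ ^ 2) ^ (k / 2) * ‖u y‖ ^ 2 := by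
        rw [hF, integral_const_mul]

/-! ### Positivity of the nonlinear term -/

lemma integral_rpow_pos (u : SchwartzMap E ℂ) (hu : u ≠ 0) {r : ℝ} (hr : 1 ≤ r) :
    0 < ∫ x : E, ‖u x‖ ^ r := by
  have hnonneg : 0 ≤ fun x : E => ‖u x‖ ^ r := fun x => Real.rpow_nonneg (norm_nonneg _) _
  rw [integral_pos_iff_support_of_nonneg hnonneg (integrable_rpow_norm u hr)]
  have hsubset : Function.support (⇑u) ⊆ Function.support fun x : E => ‖u x‖ ^ r := by
    intro x hx
    have : (0:ℝ) < ‖u x‖ := norm_pos_iff.mpr hx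
    simp only [Function.mem_support]
    exact (Real.rpow_pos_of_pos this r).ne'
  have hopen : IsOpen (Function.support (⇑u)) := by
    have : Function.support (⇑u) = (⇑u) ⁻¹' {0}ᶜ := by
      ext x; simp [Function.mem_support]
    rw [this]
    exact (isClosed_singleton.preimage u.continuous).isOpen_compl
  have hne : (Function.support (⇑u)).Nonempty := by
    rw [Function.support_nonempty_iff]
    intro h0
    exact hu (SchwartzMap.ext fun x => by simpa using congrFun h0 x)
  calc (0:ENNReal) < volume (Function.support (⇑u)) := hopen.measure_pos volume hne
    _ ≤ volume (Function.support fun x : E => ‖u x‖ ^ r) := measure_mono hsubset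

lemma tendsto_bound (K M c p : ℝ) (hc : 0 < c) (hp : 2 < p) :
    Tendsto (fun s : ℝ => K * s ^ 2 + M - c * s ^ p) atTop atBot := by
  have h1 : Tendsto (fun s : ℝ => s ^ p) atTop atTop := tendsto_rpow_atTop (by linarith)
  have h2 : Tendsto (fun s : ℝ => K * s ^ (2 - p) - c) atTop (nhds (K * 0 - c)) := by
    apply Tendsto.sub_const
    apply Tendsto.const_mul
    have h := tendsto_rpow_neg_atTop (y := p - 2) (by linarith)
    convert h using 2
    ring_nf
  have h3 : Tendsto (fun s : ℝ => s ^ p * (K * s ^ (2 - p) - c)) atTop atBot :=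
    h1.atTop_mul_neg (by norm_num; linarith) h2
  have h4 := tendsto_atBot_add_const_right atTop M h3
  refine h4.congr' ?_
  filter_upwards [eventually_gt_atTop 0] with s hs
  have hsp : s ^ p * s ^ (2 - p) = s ^ 2 := by
    rw [← Real.rpow_add hs]
    norm_num
  have e1 : s ^ p * (K * s ^ (2 - p) - c) + M = K * (s ^ p * s ^ (2 - p)) + M - c * s ^ p := by
    ring
  rw [e1, hsp]

end EnergyAux

open EnergyAux

/-- In the mass supercritical case `σ > 2/d`, for every nonzero Schwartz `u`,
`E(u_s) → −∞` as `s → ∞`; in particular `E` is unbounded from below on the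
set of fixed mass and fixed angular momentum (which contains all the `u_s`). -/
theorem energy_unbounded_below (d : ℕ) (hd : d = 2 ∨ d = 3) (lam σ : ℝ)
    (hlam : 0 < lam) (hσ : 2 / (d : ℝ) < σ)
    (V : EuclideanSpace ℝ (Fin d) → ℝ) (hVc : Continuous V)
    (C₀ k : ℝ) (hC₀ : 0 < C₀) (hk : 0 < k)
    (hV : ∀ x : EuclideanSpace ℝ (Fin d),
      0 ≤ V x ∧ V x ≤ C₀ * (1 + ‖x‖ ^ 2) ^ (k / 2))
    (u : SchwartzMap (EuclideanSpace ℝ (Fin d)) ℂ) (hu : u ≠ 0) :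
    Tendsto (fun s : ℝ => energy V lam σ (scl s (⇑u))) atTop atBot := by
  have hd0 : (0:ℝ) < (d:ℝ) := by rcases hd with h | h <;> simp [h]
  have hσ0 : 0 < σ := lt_trans (by positivity) hσ
  have hσ1 : (0:ℝ) < σ + 1 := by linarith
  have hr1 : (1:ℝ) ≤ 2 * σ + 2 := by linarith
  set K : ℝ := ∫ x, ‖fderiv ℝ (⇑u) x‖ ^ 2 with hK
  set M : ℝ := C₀ * ∫ y, (1 + ‖y‖ ^ 2) ^ (k / 2) * ‖u y‖ ^ 2 with hM
  set N : ℝ := ∫ x, ‖u x‖ ^ (2 * σ + 2) with hN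
  have hNpos : 0 < N := integral_rpow_pos u hu hr1
  set c : ℝ := lam / (σ + 1) * N with hc
  have hcpos : 0 < c := by
    apply mul_pos (div_pos hlam hσ1) hNpos
  set p : ℝ := (d:ℝ) * σ with hp
  have hp2 : 2 < p := by
    rw [div_lt_iff₀ hd0] at hσ
    rw [hp]
    nlinarith
  apply tendsto_atBot_mono' atTop ?_ (tendsto_bound (1 / 2 * K) M c p hcpos hp2)
  filter_upwards [eventually_ge_atTop 1] with s hs1
  have hs0 : (0:ℝ) < s := lt_of_lt_of_le one_pos hs1
  set w := sclSchwartz s hs0 u with hwdef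
  have hw : ⇑w = scl s ⇑u := sclSchwartz_coe s hs0 u
  have hA : Integrable (fun x => ‖fderiv ℝ (scl s (⇑u)) x‖ ^ 2) := by
    refine (integrable_sq_norm ((SchwartzMap.fderivCLM ℝ (EuclideanSpace ℝ (Fin d)) ℂ) w)).congr
      (Filter.Eventually.of_forall fun x => ?_)
    simp only [SchwartzMap.fderivCLM_apply, hw]
  have hhalfA : Integrable (fun x => (1 / 2 : ℝ) * ‖fderiv ℝ (scl s (⇑u)) x‖ ^ 2) :=
    hA.const_mul _
  have hB : Integrable (fun x => V x * ‖scl s (⇑u) x‖ ^ 2) :=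
    integrable_V_mul hs1 u V hVc hC₀ hk hV
  have hC : Integrable (fun x => (lam / (σ + 1)) * ‖scl s (⇑u) x‖ ^ (2 * σ + 2)) := by
    apply Integrable.const_mul
    refine (integrable_rpow_norm w hr1).congr (Filter.Eventually.of_forall fun x => ?_)
    rw [hw]
  have hsplit : energy V lam σ (scl s (⇑u))
      = (1 / 2 : ℝ) * (∫ x, ‖fderiv ℝ (scl s (⇑u)) x‖ ^ 2)
        + (∫ x, V x * ‖scl s (⇑u) x‖ ^ 2)
        - (lam / (σ + 1)) * ∫ x, ‖scl s (⇑u) x‖ ^ (2 * σ + 2) := by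
    unfold energy
    have hAB : Integrable (fun x => (1 / 2 : ℝ) * ‖fderiv ℝ (scl s (⇑u)) x‖ ^ 2
        + V x * ‖scl s (⇑u) x‖ ^ 2) := hhalfA.add hB
    rw [integral_sub hAB hC, integral_add hhalfA hB, integral_const_mul,
      integral_const_mul]
  rw [hsplit, integral_grad_scl hs0 u, integral_rpow_scl hs0 u σ]
  have hBle : (∫ x, V x * ‖scl s (⇑u) x‖ ^ 2) ≤ M :=
    integral_potential_le hs1 u V hVc hC₀ hk hV
  have e1 : (1 / 2 : ℝ) * (s ^ 2 * K) = 1 / 2 * K * s ^ 2 := by ring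
  have e2 : lam / (σ + 1) * (s ^ ((d:ℝ) * σ) * N) = c * s ^ p := by
    rw [hc, hp]; ring
  linarith [hBle]

end
end

section
/- Let d = 2 or d = 3, λ > 0, and σ > 2/d. Let V : ℝ^d → ℝ be continuously differentiable, nonnegative, with ⟨∇V(x), x⟩ > 0 for all x ≠ 0, and with V and ∇V of at most polynomial growth. Then for every Schwartz function u : ℝ^d → ℂ one has the identity E(u) − (1/(σd)) P(u) = (1/2 − 1/(σd)) ∫_{ℝ^d} |∇u|² dx + ∫_{ℝ^d} V(x)|u|² dx + (1/(σd)) ∫_{ℝ^d} ⟨∇V(x), x⟩ |u|² dx. Consequently, if u is not identically zero and P(u) = 0, then E(u) > 0. -/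
open MeasureTheory Real Complex Filter

noncomputable section

/-- The Pohozaev functional
`P(u) = ∫ |∇u|² − ⟨∇V(x), x⟩|u|² − (λσd/(σ+1))|u|^{2σ+2}`,
where `⟨∇V(x), x⟩ = dV(x)[x]`. -/
def poho {d : ℕ} (V : EuclideanSpace ℝ (Fin d) → ℝ) (lam σ : ℝ)
    (u : EuclideanSpace ℝ (Fin d) → ℂ) : ℝ :=
  ∫ x, ‖fderiv ℝ u x‖ ^ 2 - fderiv ℝ V x x * ‖u x‖ ^ 2
    - (lam * σ * (d : ℝ) / (σ + 1)) * ‖u x‖ ^ (2 * σ + 2)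

/-- Every Schwartz map is (globally) bounded. -/
lemma schwartz_bound' {d : ℕ} {F : Type*} [NormedAddCommGroup F] [NormedSpace ℝ F]
    (f : SchwartzMap (EuclideanSpace ℝ (Fin d)) F) :
    ∃ M : ℝ, 0 ≤ M ∧ ∀ x, ‖f x‖ ≤ M := by
  obtain ⟨C, hC0, hC⟩ := f.decay 0 0
  refine ⟨C, hC0.le, fun x => ?_⟩
  have := hC x
  simpa [norm_iteratedFDeriv_zero] using this

/-- Integrability of a Schwartz function against a polynomial weight. -/
lemma integrable_weight' {d : ℕ} (f : SchwartzMap (EuclideanSpace ℝ (Fin d)) ℂ)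
    {k : ℝ} (hk : 0 ≤ k) :
    Integrable (fun x => (1 + ‖x‖) ^ k * ‖f x‖) := by
  set n : ℕ := ⌈k⌉₊ with hn
  have hint : Integrable (fun x : EuclideanSpace ℝ (Fin d) =>
      (2 : ℝ) ^ n * (‖f x‖ + ‖x‖ ^ n * ‖f x‖)) :=
    (f.integrable.norm.add (f.integrable_pow_mul volume n)).const_mul _
  refine hint.mono' ?_ (Filter.Eventually.of_forall fun x => ?_)
  · exact (((continuous_const.add continuous_norm).rpow_const
      (fun x => Or.inr hk)).mul f.continuous.norm).aestronglyMeasurable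
  · have h1 : (0:ℝ) ≤ 1 + ‖x‖ := by positivity
    have h2 : (1 + ‖x‖) ^ k ≤ (1 + ‖x‖) ^ (n : ℝ) :=
      Real.rpow_le_rpow_of_exponent_le (by simpa using norm_nonneg x) (Nat.le_ceil k)
    rw [Real.rpow_natCast] at h2
    have h3 : (1 + ‖x‖) ^ n ≤ 2 ^ n * (1 + ‖x‖ ^ n) := by
      rcases le_total ‖x‖ 1 with h | h
      · calc (1 + ‖x‖) ^ n ≤ 2 ^ n := pow_le_pow_left₀ h1 (by linarith) n
          _ ≤ 2 ^ n * (1 + ‖x‖ ^ n) := le_mul_of_one_le_right (by positivity)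
              (by nlinarith [pow_nonneg (norm_nonneg x) n])
      · calc (1 + ‖x‖) ^ n ≤ (2 * ‖x‖) ^ n := pow_le_pow_left₀ h1 (by linarith) n
          _ = 2 ^ n * ‖x‖ ^ n := mul_pow 2 ‖x‖ n
          _ ≤ 2 ^ n * (1 + ‖x‖ ^ n) := by
              nlinarith [pow_nonneg (norm_nonneg x) n, pow_pos (zero_lt_two (α := ℝ)) n]
    have hfx : (0:ℝ) ≤ ‖f x‖ := norm_nonneg _
    have hw : (0:ℝ) ≤ (1 + ‖x‖) ^ k := Real.rpow_nonneg h1 k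
    rw [Real.norm_eq_abs, _root_.abs_of_nonneg (mul_nonneg hw hfx)]
    calc (1 + ‖x‖) ^ k * ‖f x‖ ≤ (2 ^ n * (1 + ‖x‖ ^ n)) * ‖f x‖ :=
          mul_le_mul_of_nonneg_right (h2.trans h3) hfx
      _ = 2 ^ n * (‖f x‖ + ‖x‖ ^ n * ‖f x‖) := by ring

/-- Integrability of `W · ‖f‖²` for a polynomially bounded continuous weight `W`. -/
lemma integrable_weighted_sq' {d : ℕ} (f : SchwartzMap (EuclideanSpace ℝ (Fin d)) ℂ)
    {W : EuclideanSpace ℝ (Fin d) → ℝ} (hWc : Continuous W)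
    {C k : ℝ} (hC : 0 ≤ C) (hk : 0 ≤ k) (hW : ∀ x, |W x| ≤ C * (1 + ‖x‖) ^ k) :
    Integrable (fun x => W x * ‖f x‖ ^ 2) := by
  obtain ⟨M, hM0, hM⟩ := schwartz_bound' f
  have hint := (integrable_weight' f hk).const_mul (C * M)
  refine hint.mono' ((hWc.mul (f.continuous.norm.pow 2)).aestronglyMeasurable)
    (Filter.Eventually.of_forall fun x => ?_)
  have hfx : (0:ℝ) ≤ ‖f x‖ := norm_nonneg _
  rw [Real.norm_eq_abs, abs_mul, _root_.abs_of_nonneg (by positivity : (0:ℝ) ≤ ‖f x‖ ^ 2)]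
  calc |W x| * ‖f x‖ ^ 2 ≤ (C * (1 + ‖x‖) ^ k) * (M * ‖f x‖) := by
        refine mul_le_mul (hW x) ?_ (by positivity) ?_
        · nlinarith [hM x]
        · positivity
    _ = (C * M) * ((1 + ‖x‖) ^ k * ‖f x‖) := by ring

/-- Integrability of `‖f‖^p` (real power, `p ≥ 1`) for a Schwartz function. -/
lemma integrable_rpow' {d : ℕ} (f : SchwartzMap (EuclideanSpace ℝ (Fin d)) ℂ)
    {p : ℝ} (hp : 1 ≤ p) :
    Integrable (fun x => ‖f x‖ ^ p) := by
  obtain ⟨M, hM0, hM⟩ := schwartz_bound' f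
  have hint := (f.integrable (μ := volume)).norm.const_mul ((max 1 M) ^ (p - 1))
  refine hint.mono' ((f.continuous.norm.rpow_const fun x => Or.inr (by linarith)).aestronglyMeasurable)
    (Filter.Eventually.of_forall fun x => ?_)
  have ha : (0:ℝ) ≤ ‖f x‖ := norm_nonneg _
  rw [Real.norm_eq_abs, _root_.abs_of_nonneg (Real.rpow_nonneg ha p)]
  rcases eq_or_lt_of_le ha with h0 | h0
  · rw [← h0, Real.zero_rpow (by linarith)]
    positivity
  · have heq : ‖f x‖ ^ p = ‖f x‖ ^ (p - 1) * ‖f x‖ := by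
      rw [show p = (p - 1) + 1 by ring, Real.rpow_add_one h0.ne']
      ring_nf
    rw [heq]
    have h1 : ‖f x‖ ^ (p - 1) ≤ (max 1 M) ^ (p - 1) :=
      Real.rpow_le_rpow ha ((hM x).trans (le_max_right 1 M)) (by linarith)
    exact mul_le_mul_of_nonneg_right h1 ha

/-- Integrability of `‖f‖²` for a Schwartz function. -/
lemma integrable_normsq' {d : ℕ} {F : Type*} [NormedAddCommGroup F] [NormedSpace ℝ F]
    (f : SchwartzMap (EuclideanSpace ℝ (Fin d)) F) :
    Integrable (fun x => ‖f x‖ ^ 2) := by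
  obtain ⟨M, hM0, hM⟩ := schwartz_bound' f
  refine ((f.integrable (μ := volume)).norm.const_mul M).mono'
    ((f.continuous.norm.pow 2).aestronglyMeasurable)
    (Filter.Eventually.of_forall fun x => ?_)
  rw [Real.norm_eq_abs, _root_.abs_of_nonneg (by positivity)]
  nlinarith [hM x, norm_nonneg (f x)]

/-- The identity `E(u) − (1/(σd)) P(u)
  = (1/2 − 1/(σd)) ∫|∇u|² + ∫ V|u|² + (1/(σd)) ∫ ⟨∇V(x),x⟩|u|²`;
consequently, if `u ≠ 0` and `P(u) = 0` then `E(u) > 0`. -/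
theorem energy_poho_identity (d : ℕ) (hd : d = 2 ∨ d = 3) (lam σ : ℝ)
    (hlam : 0 < lam) (hσ : 2 / (d : ℝ) < σ)
    (V : EuclideanSpace ℝ (Fin d) → ℝ) (hV1 : ContDiff ℝ 1 V) (hV0 : ∀ x, 0 ≤ V x)
    (hVx : ∀ x : EuclideanSpace ℝ (Fin d), x ≠ 0 → 0 < fderiv ℝ V x x)
    (hVg : ∃ C k : ℝ, 0 < C ∧ 0 < k ∧ ∀ x : EuclideanSpace ℝ (Fin d),
      |V x| ≤ C * (1 + ‖x‖) ^ k ∧ ‖fderiv ℝ V x‖ ≤ C * (1 + ‖x‖) ^ k)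
    (u : SchwartzMap (EuclideanSpace ℝ (Fin d)) ℂ) :
    (energy V lam σ (⇑u) - (1 / (σ * (d : ℝ))) * poho V lam σ (⇑u)
      = (1 / 2 - 1 / (σ * (d : ℝ))) * (∫ x, ‖fderiv ℝ (⇑u) x‖ ^ 2)
        + (∫ x, V x * ‖u x‖ ^ 2)
        + (1 / (σ * (d : ℝ))) * (∫ x, fderiv ℝ V x x * ‖u x‖ ^ 2)) ∧
    (u ≠ 0 → poho V lam σ (⇑u) = 0 → 0 < energy V lam σ (⇑u)) := by
  have hd0 : (0:ℝ) < d := by rcases hd with rfl | rfl <;> norm_num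
  have hσ0 : 0 < σ := lt_trans (by positivity) hσ
  have hσd : (2:ℝ) < σ * d := by
    rw [div_lt_iff₀ hd0] at hσ; linarith
  have hσd0 : σ * (d:ℝ) ≠ 0 := by positivity
  have hσ1 : σ + 1 ≠ 0 := by positivity
  obtain ⟨C, k, hCpos, hkpos, hCk⟩ := hVg
  -- integrability
  have h1 : Integrable (fun x : EuclideanSpace ℝ (Fin d) => ‖fderiv ℝ (⇑u) x‖ ^ 2) := by
    simpa using integrable_normsq' (SchwartzMap.fderivCLM ℝ _ _ u)
  have h2 : Integrable (fun x : EuclideanSpace ℝ (Fin d) => V x * ‖u x‖ ^ 2) :=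
    integrable_weighted_sq' u hV1.continuous hCpos.le hkpos.le (fun x => (hCk x).1)
  have hWc : Continuous (fun x : EuclideanSpace ℝ (Fin d) => fderiv ℝ V x x) :=
    (hV1.continuous_fderiv_apply one_ne_zero).comp (continuous_id.prodMk continuous_id)
  have h3 : Integrable (fun x : EuclideanSpace ℝ (Fin d) => fderiv ℝ V x x * ‖u x‖ ^ 2) := by
    refine integrable_weighted_sq' u hWc (C := C) (k := k + 1) hCpos.le (by linarith) fun x => ?_
    have hb : |fderiv ℝ V x x| ≤ ‖fderiv ℝ V x‖ * ‖x‖ := by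
      rw [← Real.norm_eq_abs]
      exact (fderiv ℝ V x).le_opNorm x
    have h1x : (0:ℝ) < 1 + ‖x‖ := by positivity
    calc |fderiv ℝ V x x| ≤ ‖fderiv ℝ V x‖ * ‖x‖ := hb
      _ ≤ (C * (1 + ‖x‖) ^ k) * (1 + ‖x‖) := by
          refine mul_le_mul (hCk x).2 (by linarith) (norm_nonneg x) ?_
          positivity
      _ = C * (1 + ‖x‖) ^ (k + 1) := by
          rw [Real.rpow_add_one h1x.ne']
          ring
  have h4 : Integrable (fun x : EuclideanSpace ℝ (Fin d) => ‖u x‖ ^ (2 * σ + 2)) :=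
    integrable_rpow' u (by linarith)
  -- compute energy and poho as combinations of the four integrals
  have hE : energy V lam σ (⇑u) = (1/2 : ℝ) * (∫ x, ‖fderiv ℝ (⇑u) x‖ ^ 2)
      + (∫ x, V x * ‖u x‖ ^ 2) - (lam / (σ + 1)) * (∫ x, ‖u x‖ ^ (2 * σ + 2)) := by
    have h1' : Integrable (fun x : EuclideanSpace ℝ (Fin d) =>
        (1/2 : ℝ) * ‖fderiv ℝ (⇑u) x‖ ^ 2) volume := h1.const_mul _
    have h12 : Integrable (fun x : EuclideanSpace ℝ (Fin d) =>
        (1/2 : ℝ) * ‖fderiv ℝ (⇑u) x‖ ^ 2 + V x * ‖u x‖ ^ 2) volume := h1'.add h2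
    have h4' : Integrable (fun x : EuclideanSpace ℝ (Fin d) =>
        (lam / (σ + 1)) * ‖u x‖ ^ (2 * σ + 2)) volume := h4.const_mul _
    rw [energy, integral_sub h12 h4', integral_add h1' h2, integral_const_mul _ _,
      integral_const_mul _ _]
  have hP : poho V lam σ (⇑u) = (∫ x, ‖fderiv ℝ (⇑u) x‖ ^ 2)
      - (∫ x, fderiv ℝ V x x * ‖u x‖ ^ 2)
      - (lam * σ * (d : ℝ) / (σ + 1)) * (∫ x, ‖u x‖ ^ (2 * σ + 2)) := by
    have h13 : Integrable (fun x : EuclideanSpace ℝ (Fin d) =>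
        ‖fderiv ℝ (⇑u) x‖ ^ 2 - fderiv ℝ V x x * ‖u x‖ ^ 2) volume := h1.sub h3
    have h4' : Integrable (fun x : EuclideanSpace ℝ (Fin d) =>
        (lam * σ * (d : ℝ) / (σ + 1)) * ‖u x‖ ^ (2 * σ + 2)) volume := h4.const_mul _
    rw [poho, integral_sub h13 h4', integral_sub h1 h3, integral_const_mul _ _]
  have hid : energy V lam σ (⇑u) - (1 / (σ * (d : ℝ))) * poho V lam σ (⇑u)
      = (1 / 2 - 1 / (σ * (d : ℝ))) * (∫ x, ‖fderiv ℝ (⇑u) x‖ ^ 2)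
        + (∫ x, V x * ‖u x‖ ^ 2)
        + (1 / (σ * (d : ℝ))) * (∫ x, fderiv ℝ V x x * ‖u x‖ ^ 2) := by
    rw [hE, hP]
    field_simp
    ring
  refine ⟨hid, fun hne hP0 => ?_⟩
  have hEeq : energy V lam σ (⇑u)
      = (1 / 2 - 1 / (σ * (d : ℝ))) * (∫ x, ‖fderiv ℝ (⇑u) x‖ ^ 2)
        + (∫ x, V x * ‖u x‖ ^ 2)
        + (1 / (σ * (d : ℝ))) * (∫ x, fderiv ℝ V x x * ‖u x‖ ^ 2) := by
    rw [hP0, mul_zero, sub_zero] at hid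
    exact hid
  -- find a nonzero point where u does not vanish
  have hx1 : ∃ x : EuclideanSpace ℝ (Fin d), x ≠ 0 ∧ u x ≠ 0 := by
    have hx0 : ∃ x, u x ≠ 0 := by
      by_contra h
      push_neg at h
      exact hne (SchwartzMap.ext fun x => by simpa using h x)
    obtain ⟨x₀, hx₀⟩ := hx0
    rcases eq_or_ne x₀ 0 with rfl | hne0
    · have hopen : IsOpen {x : EuclideanSpace ℝ (Fin d) | u x ≠ 0} :=
        isOpen_compl_singleton.preimage u.continuous
      obtain ⟨ε, hε, hball⟩ := Metric.isOpen_iff.mp hopen 0 hx₀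
      have hdpos : 0 < d := by rcases hd with rfl | rfl <;> norm_num
      set y : EuclideanSpace ℝ (Fin d) := EuclideanSpace.single ⟨0, hdpos⟩ (1 : ℝ) with hy
      have hynorm : ‖y‖ = 1 := by simp [hy, EuclideanSpace.norm_single]
      refine ⟨(ε / 2) • y, ?_, ?_⟩
      · intro h
        have : ‖(ε / 2) • y‖ = 0 := by rw [h, norm_zero]
        rw [norm_smul, hynorm, mul_one, Real.norm_eq_abs, abs_of_pos (by linarith)] at this
        linarith
      · apply hball
        rw [Metric.mem_ball, dist_zero_right, norm_smul, hynorm, mul_one,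
          Real.norm_eq_abs, abs_of_pos (by linarith)]
        linarith
    · exact ⟨x₀, hne0, hx₀⟩
  obtain ⟨x₁, hx₁, hux₁⟩ := hx1
  -- positivity of the three terms
  have hAnn : (0:ℝ) ≤ ∫ x, ‖fderiv ℝ (⇑u) x‖ ^ 2 :=
    integral_nonneg fun x => by positivity
  have hBnn : (0:ℝ) ≤ ∫ x, V x * ‖u x‖ ^ 2 :=
    integral_nonneg fun x => mul_nonneg (hV0 x) (by positivity)
  have hnn : ∀ x : EuclideanSpace ℝ (Fin d), 0 ≤ fderiv ℝ V x x * ‖u x‖ ^ 2 := by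
    intro x
    rcases eq_or_ne x 0 with rfl | hx
    · simp
    · exact mul_nonneg (hVx x hx).le (by positivity)
  have hf3c : Continuous (fun x : EuclideanSpace ℝ (Fin d) => fderiv ℝ V x x * ‖u x‖ ^ 2) :=
    hWc.mul (u.continuous.norm.pow 2)
  have hf3pos : 0 < fderiv ℝ V x₁ x₁ * ‖u x₁‖ ^ 2 :=
    mul_pos (hVx x₁ hx₁) (pow_pos (norm_pos_iff.mpr hux₁) 2)
  have hCpos' : (0:ℝ) < ∫ x, fderiv ℝ V x x * ‖u x‖ ^ 2 := by
    rw [integral_pos_iff_support_of_nonneg hnn h3]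
    have hos : IsOpen (Function.support fun x : EuclideanSpace ℝ (Fin d) =>
        fderiv ℝ V x x * ‖u x‖ ^ 2) := by
      rw [Function.support_eq_preimage]
      exact isOpen_compl_singleton.preimage hf3c
    exact hos.measure_pos volume ⟨x₁, by
      simp only [Function.mem_support]
      exact hf3pos.ne'⟩
  have hc1 : (0:ℝ) ≤ 1 / 2 - 1 / (σ * d) := by
    rw [sub_nonneg]
    exact one_div_le_one_div_of_le (by norm_num) hσd.le
  have hc2 : (0:ℝ) < 1 / (σ * d) := by positivity
  rw [hEeq]
  have t1 := mul_nonneg hc1 hAnn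
  have t2 := mul_pos hc2 hCpos'
  linarith

end
end
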